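/- arXiv:2502.10553 — 3 statements merged into one kernel-verified Lean document; each statement's English description precedes it below -/
import Mathlib

section
/- Let X be a nonnegative real random variable with E[X]<∞ and P(X>0)>0. Let y_1,…,y_L be finitely many nonnegative reals with y_max := max{y_i : 1≤i≤L} > 0. Define g(x) = (1/x)·E[ X·e^{xX} / ∑_{j=1}^L e^{y_j X} ]. Then g is a convex continuous function on (0, y_max]. In particular, either g is strictly decreasing on (0, y_max), or g has a unique global minimum at some point x_* with 0<x_*<y_max, g being strictly decreasing on (0, x_*) and strictly increasing on (x_*, y_max). Furthermore, g(x)→∞ as x→0+ and, viewing g as an extended-real-valued function, g(x)→∞ as x→∞. -/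
open MeasureTheory Filter Topology Set

lemma aux_psi (c : ℝ) : StrictConvexOn ℝ (Set.Ioi (0:ℝ)) (fun x => Real.exp (c*x) / x) := by
  have hd1 : ∀ x : ℝ, 0 < x → HasDerivAt (fun x => Real.exp (c*x) / x)
      (Real.exp (c*x) * (c*x - 1) / x^2) x := by
    intro x hx
    have he : HasDerivAt (fun x : ℝ => Real.exp (c*x)) (Real.exp (c*x) * c) x := by
      simpa using ((hasDerivAt_id x).const_mul c).exp
    have h := he.div (hasDerivAt_id x) hx.ne'
    refine h.congr_deriv ?_
    simp only [id, Pi.mul_apply]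
    field_simp
  have hd2 : ∀ x : ℝ, 0 < x → HasDerivAt (fun x => Real.exp (c*x) * (c*x - 1) / x^2)
      (Real.exp (c*x) * ((c*x-1)^2 + 1) / x^3) x := by
    intro x hx
    have he : HasDerivAt (fun x : ℝ => Real.exp (c*x)) (Real.exp (c*x) * c) x := by
      simpa using ((hasDerivAt_id x).const_mul c).exp
    have hl : HasDerivAt (fun x : ℝ => c*x - 1) c x := by
      simpa using ((hasDerivAt_id x).const_mul c).sub_const 1
    have hnum := he.mul hl
    have hden : HasDerivAt (fun x : ℝ => x^2) (2*x) x := by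
      simpa using hasDerivAt_pow 2 x
    have h := hnum.div hden (by positivity)
    refine h.congr_deriv ?_
    simp only [id, Pi.mul_apply]
    field_simp
    ring
  apply strictConvexOn_of_deriv2_pos (convex_Ioi 0)
  · exact ContinuousOn.div
      (Real.continuous_exp.comp (continuous_const.mul continuous_id)).continuousOn
      continuousOn_id (fun x hx => ne_of_gt hx)
  · intro x hx
    rw [interior_Ioi] at hx
    have hx0 : (0:ℝ) < x := hx
    have h1 : deriv (fun x => Real.exp (c*x)/x)
        =ᶠ[𝓝 x] (fun x => Real.exp (c*x)*(c*x-1)/x^2) := by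
      filter_upwards [Ioi_mem_nhds hx0] with t ht
      exact (hd1 t ht).deriv
    have h2 : deriv^[2] (fun x => Real.exp (c*x)/x) x
        = Real.exp (c*x) * ((c*x-1)^2+1)/x^3 := by
      rw [Function.iterate_succ_apply', Function.iterate_one]
      rw [Filter.EventuallyEq.deriv_eq h1]
      exact (hd2 x hx0).deriv
    rw [h2]
    positivity

lemma aux_tri {f : ℝ → ℝ} {m : ℝ} (hm : 0 < m)
    (hconv : StrictConvexOn ℝ (Ioc 0 m) f)
    (hcont : ContinuousOn f (Ioc 0 m))
    (hblow : Tendsto f (𝓝[>] (0:ℝ)) atTop) :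
    StrictAntiOn f (Ioo 0 m) ∨
      ∃ xs : ℝ, 0 < xs ∧ xs < m ∧
        (∀ x ∈ Ioc (0:ℝ) m, x ≠ xs → f xs < f x) ∧
        StrictAntiOn f (Ioo 0 xs) ∧ StrictMonoOn f (Ioo xs m) := by
  have tp : ∀ x z u : ℝ, x ∈ Ioc (0:ℝ) m → z ∈ Ioc (0:ℝ) m → x < u → u < z →
      f u < ((z-u)/(z-x)) * f x + ((u-x)/(z-x)) * f z := by
    intro x z u hx hz hxu huz
    have hxz : x < z := hxu.trans huz
    have h0 : (0:ℝ) < z - x := by linarith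
    have ha : 0 < (z-u)/(z-x) := div_pos (by linarith) h0
    have hb : 0 < (u-x)/(z-x) := div_pos (by linarith) h0
    have hab : (z-u)/(z-x) + (u-x)/(z-x) = 1 := by field_simp; ring
    have h := hconv.2 hx hz hxz.ne ha hb hab
    have hcomb : ((z-u)/(z-x)) • x + ((u-x)/(z-x)) • z = u := by
      simp only [smul_eq_mul]
      field_simp
      ring
    rw [hcomb] at h
    simpa [smul_eq_mul] using h
  by_cases hSA : StrictAntiOn f (Ioo 0 m)
  · exact Or.inl hSA
  right
  unfold StrictAntiOn at hSA
  push_neg at hSA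
  obtain ⟨a, ha, b, hb, hab, hfab⟩ := hSA
  have h1 : ∀ᶠ x in 𝓝[>] (0:ℝ), f a < f x := hblow.eventually (eventually_gt_atTop (f a))
  have h2 : Ioo (0:ℝ) a ∈ 𝓝[>] (0:ℝ) := Ioo_mem_nhdsGT_of_mem ⟨le_refl 0, ha.1⟩
  obtain ⟨c, hfc, hc0, hca⟩ := (h1.and (eventually_of_mem h2 (fun x hx => hx))).exists
  have hKsub : Icc c m ⊆ Ioc 0 m := fun t ht => ⟨lt_of_lt_of_le hc0 ht.1, ht.2⟩
  obtain ⟨xs, hxsK, hxs_min⟩ := isCompact_Icc.exists_isMinOn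
    (nonempty_Icc.2 (by linarith [ha.2] : c ≤ m)) (hcont.mono hKsub)
  have hmin : ∀ t ∈ Icc c m, f xs ≤ f t := fun t ht => hxs_min ht
  have hstrict : ∀ t ∈ Icc c m, t ≠ xs → f xs < f t := by
    intro t ht hne
    have h12 := hconv.2 (hKsub ht) (hKsub hxsK) hne
      (by norm_num : (0:ℝ) < 1/2) (by norm_num : (0:ℝ) < 1/2) (by norm_num)
    simp only [smul_eq_mul] at h12
    have hwK : (1/2:ℝ)*t + (1/2)*xs ∈ Icc c m := by
      constructor
      · nlinarith [ht.1, hxsK.1]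
      · nlinarith [ht.2, hxsK.2]
    have h3 := hmin _ hwK
    by_contra hle
    push_neg at hle
    have h4 := hmin t ht
    linarith
  have haK : a ∈ Icc c m := ⟨hca.le, ha.2.le⟩
  have hbK : b ∈ Icc c m := ⟨by linarith [hca], hb.2.le⟩
  have hfa : f xs ≤ f a := hmin a haK
  have hxs_ne_c : xs ≠ c := by
    intro h
    rw [h] at hfa
    linarith
  have hc_lt_xs : c < xs := lt_of_le_of_ne hxsK.1 (Ne.symm hxs_ne_c)
  have hxs_pos : 0 < xs := hc0.trans hc_lt_xs
  have hblt : f b < f m := by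
    have h3 := tp a m b ⟨ha.1, ha.2.le⟩ ⟨hm, le_refl m⟩ hab hb.2
    have hA : 0 < (m - b)/(m - a) := div_pos (by linarith [hb.2]) (by linarith [ha.2])
    have hB : 0 < (b - a)/(m - a) := div_pos (by linarith) (by linarith [ha.2])
    have hAB : (m - b)/(m - a) + (b - a)/(m - a) = 1 := by
      have : m - a ≠ 0 := by linarith [ha.2]
      field_simp; ring
    by_contra hle
    push_neg at hle
    have hsum : (m - b)/(m - a) * f b + (b - a)/(m - a) * f b = f b := by
      rw [← add_mul, hAB, one_mul]
    linarith [mul_le_mul_of_nonneg_left hfab hA.le, mul_le_mul_of_nonneg_left hle hB.le]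
  have hxs_lt_m : xs < m := by
    rcases lt_or_eq_of_le hxsK.2 with h | h
    · exact h
    · exfalso
      have := hmin b hbK
      rw [h] at this
      linarith
  have hglobal : ∀ x ∈ Ioc (0:ℝ) m, x ≠ xs → f xs < f x := by
    intro x hx hne
    rcases le_or_gt c x with h | h
    · exact hstrict x ⟨h, hx.2⟩ hne
    · have hfc_xs : f xs < f c := hstrict c ⟨le_refl c, by linarith [ha.2]⟩ (Ne.symm hxs_ne_c)
      have hxsS : xs ∈ Ioc (0:ℝ) m := ⟨hxs_pos, hxs_lt_m.le⟩
      have h3 := tp x xs c hx hxsS h hc_lt_xs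
      have hden : (0:ℝ) < xs - x := by linarith
      have hA : 0 < (xs - c)/(xs - x) := div_pos (by linarith) hden
      have hB : 0 < (c - x)/(xs - x) := div_pos (by linarith) hden
      have hAB : (xs - c)/(xs - x) + (c - x)/(xs - x) = 1 := by field_simp; ring
      by_contra hle
      push_neg at hle
      have hsum : (xs - c)/(xs - x) * f xs + (c - x)/(xs - x) * f xs = f xs := by
        rw [← add_mul, hAB, one_mul]
      linarith [mul_le_mul_of_nonneg_left hle hA.le]
  refine ⟨xs, hxs_pos, hxs_lt_m, hglobal, ?_, ?_⟩
  · intro u hu v hv huv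
    have huS : u ∈ Ioc (0:ℝ) m := ⟨hu.1, by linarith [hu.2, hxs_lt_m]⟩
    have hxsS : xs ∈ Ioc (0:ℝ) m := ⟨hxs_pos, hxs_lt_m.le⟩
    have h3 := tp u xs v huS hxsS huv hv.2
    have hvS : v ∈ Ioc (0:ℝ) m := ⟨hu.1.trans huv, by linarith [hv.2, hxs_lt_m]⟩
    have hfv : f xs ≤ f v := (hglobal v hvS hv.2.ne).le
    have hden : (0:ℝ) < xs - u := by linarith [hv.2]
    have hA : 0 < (xs - v)/(xs - u) := div_pos (by linarith [hv.2]) hden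
    have hB : 0 < (v - u)/(xs - u) := div_pos (by linarith) hden
    have hAB : (xs - v)/(xs - u) + (v - u)/(xs - u) = 1 := by field_simp; ring
    by_contra hle
    push_neg at hle
    have hsum : (xs - v)/(xs - u) * f v + (v - u)/(xs - u) * f v = f v := by
      rw [← add_mul, hAB, one_mul]
    linarith [mul_le_mul_of_nonneg_left hfv hB.le, mul_le_mul_of_nonneg_left hle hA.le]
  · intro u hu v hv huv
    have hxsS : xs ∈ Ioc (0:ℝ) m := ⟨hxs_pos, hxs_lt_m.le⟩
    have hvS : v ∈ Ioc (0:ℝ) m := ⟨hxs_pos.trans hv.1, hv.2.le⟩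
    have h3 := tp xs v u hxsS hvS hu.1 huv
    have huS : u ∈ Ioc (0:ℝ) m := ⟨hxs_pos.trans hu.1, hu.2.le⟩
    have hfu : f xs ≤ f u := (hglobal u huS hu.1.ne').le
    have hden : (0:ℝ) < v - xs := by linarith [hu.1]
    have hA : 0 < (v - u)/(v - xs) := div_pos (by linarith) hden
    have hB : 0 < (u - xs)/(v - xs) := div_pos (by linarith [hu.1]) hden
    have hAB : (v - u)/(v - xs) + (u - xs)/(v - xs) = 1 := by field_simp; ring
    by_contra hle
    push_neg at hle
    have hsum : (v - u)/(v - xs) * f u + (u - xs)/(v - xs) * f u = f u := by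
      rw [← add_mul, hAB, one_mul]
    linarith [mul_le_mul_of_nonneg_left hfu hA.le, mul_le_mul_of_nonneg_left hle hB.le]

lemma aux_smul {s : Set ℝ} {f : ℝ → ℝ} {k : ℝ} (hk : 0 < k)
    (hf : StrictConvexOn ℝ s f) : StrictConvexOn ℝ s (fun x => k * f x) := by
  refine ⟨hf.1, fun x hx y hy hxy a b ha hb hab => ?_⟩
  have h := hf.2 hx hy hxy ha hb hab
  simp only [smul_eq_mul] at h ⊢
  nlinarith [mul_lt_mul_of_pos_left h hk]

/-- The function `g(x) = (1/x)·E[X e^{xX}/∑_j e^{y_j X}]`. -/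
noncomputable def gfun {Ω : Type*} [MeasurableSpace Ω] (μ : Measure Ω)
    (X : Ω → ℝ) (L : ℕ) (y : Fin L → ℝ) (x : ℝ) : ℝ :=
  (1 / x) * ∫ ω, X ω * Real.exp (x * X ω) / ∑ j : Fin L, Real.exp (y j * X ω) ∂μ

/-- **A useful convexity property.** -/
theorem gfun_convexity
    {Ω : Type*} [MeasurableSpace Ω] (μ : Measure Ω) [IsProbabilityMeasure μ]
    (X : Ω → ℝ) (hXmeas : Measurable X) (hXnn : ∀ ω, 0 ≤ X ω)
    (hXint : Integrable X μ) (hXpos : 0 < μ {ω | 0 < X ω})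
    (L : ℕ) (hL : 0 < L) (y : Fin L → ℝ) (hynn : ∀ i, 0 ≤ y i)
    (ymax : ℝ) (hymax_mem : ∃ i, y i = ymax) (hymax_ub : ∀ i, y i ≤ ymax)
    (hymax_pos : 0 < ymax) :
    ConvexOn ℝ (Ioc 0 ymax) (gfun μ X L y) ∧
    ContinuousOn (gfun μ X L y) (Ioc 0 ymax) ∧
    (StrictAntiOn (gfun μ X L y) (Ioo 0 ymax) ∨
      ∃ xs : ℝ, 0 < xs ∧ xs < ymax ∧
        (∀ x ∈ Ioc (0 : ℝ) ymax, x ≠ xs → gfun μ X L y xs < gfun μ X L y x) ∧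
        StrictAntiOn (gfun μ X L y) (Ioo 0 xs) ∧
        StrictMonoOn (gfun μ X L y) (Ioo xs ymax)) ∧
    Tendsto (gfun μ X L y) (𝓝[>] 0) atTop ∧
    Tendsto (fun x : ℝ =>
        ENNReal.ofReal (1 / x) *
          ∫⁻ ω, ENNReal.ofReal
            (X ω * Real.exp (x * X ω) / ∑ j : Fin L, Real.exp (y j * X ω)) ∂μ)
      atTop (𝓝 (⊤ : ENNReal)) := by
  obtain ⟨i0, hi0⟩ := hymax_mem
  set D : Ω → ℝ := fun ω => ∑ j : Fin L, Real.exp (y j * X ω) with hDdef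
  set F : ℝ → Ω → ℝ := fun x ω => X ω * Real.exp (x * X ω) / D ω with hFdef
  have hFD : ∀ x ω, F x ω = X ω * Real.exp (x * X ω) / ∑ j : Fin L, Real.exp (y j * X ω) := by
    intro x ω; simp only [hFdef, hDdef]
  have hgfun : ∀ x, gfun μ X L y x = (1/x) * ∫ ω, F x ω ∂μ := by
    intro x; simp only [gfun, hFD]
  have hD1 : ∀ ω, 1 ≤ D ω := by
    intro ω
    calc (1:ℝ) = Real.exp 0 := by simp
    _ ≤ Real.exp (y i0 * X ω) := Real.exp_le_exp.2 (mul_nonneg (hynn i0) (hXnn ω))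
    _ ≤ D ω := Finset.single_le_sum (f := fun j => Real.exp (y j * X ω))
        (fun j _ => (Real.exp_pos _).le) (Finset.mem_univ i0)
  have hDpos : ∀ ω, 0 < D ω := fun ω => lt_of_lt_of_le one_pos (hD1 ω)
  have hFnn : ∀ x ω, 0 ≤ F x ω := fun x ω =>
    div_nonneg (mul_nonneg (hXnn ω) (Real.exp_pos _).le) (hDpos ω).le
  have hFle : ∀ x, x ≤ ymax → ∀ ω, F x ω ≤ X ω := by
    intro x hx ω
    have h1 : Real.exp (x * X ω) ≤ D ω := by
      calc Real.exp (x * X ω) ≤ Real.exp (y i0 * X ω) :=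
        Real.exp_le_exp.2 (by rw [hi0]; exact mul_le_mul_of_nonneg_right hx (hXnn ω))
      _ ≤ D ω := Finset.single_le_sum (f := fun j => Real.exp (y j * X ω))
        (fun j _ => (Real.exp_pos _).le) (Finset.mem_univ i0)
    rw [hFdef]
    rw [div_le_iff₀ (hDpos ω)]
    exact mul_le_mul_of_nonneg_left h1 (hXnn ω)
  have hDmeas : Measurable D := by
    rw [hDdef]
    exact Finset.measurable_sum _ (fun j _ => Real.measurable_exp.comp (hXmeas.const_mul (y j)))
  have hFmeas : ∀ x, Measurable (F x) := by
    intro x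
    rw [hFdef]
    exact (hXmeas.mul (Real.measurable_exp.comp (hXmeas.const_mul x))).div hDmeas
  have hFint : ∀ x, x ≤ ymax → Integrable (F x) μ := by
    intro x hx
    refine hXint.mono ((hFmeas x).aestronglyMeasurable) ?_
    filter_upwards with ω
    rw [Real.norm_eq_abs, Real.norm_eq_abs, abs_of_nonneg (hFnn x ω), abs_of_nonneg (hXnn ω)]
    exact hFle x hx ω
  -- pointwise convexity
  have hGrw : ∀ ω, (fun x : ℝ => (1/x) * F x ω)
      = fun x => (X ω / D ω) * (Real.exp (X ω * x) / x) := by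
    intro ω; funext x
    simp only [hFdef]
    rw [mul_comm (X ω) x]
    ring
  have hGconv : ∀ ω, ConvexOn ℝ (Ioi 0) (fun x : ℝ => (1/x) * F x ω) := by
    intro ω
    rw [hGrw ω]
    have h := ((aux_psi (X ω)).convexOn).smul (c := X ω / D ω)
      (div_nonneg (hXnn ω) (hDpos ω).le)
    simpa [smul_eq_mul] using h
  have hGsconv : ∀ ω, 0 < X ω → StrictConvexOn ℝ (Ioi 0) (fun x : ℝ => (1/x) * F x ω) := by
    intro ω hω
    rw [hGrw ω]
    exact aux_smul (div_pos hω (hDpos ω)) (aux_psi (X ω))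
  have hGint : ∀ r : ℝ, r ∈ Ioc (0:ℝ) ymax → Integrable (fun ω => (1/r) * F r ω) μ :=
    fun r hr => (hFint r hr.2).const_mul _
  have hgs : StrictConvexOn ℝ (Ioc 0 ymax) (gfun μ X L y) := by
    refine ⟨convex_Ioc 0 ymax, ?_⟩
    intro p hp q hq hpq a b ha hb hab
    simp only [smul_eq_mul]
    have hcomb_mem : a*p + b*q ∈ Ioc (0:ℝ) ymax := (convex_Ioc 0 ymax) hp hq ha.le hb.le hab
    set s : Ω → ℝ := fun ω =>
      a * ((1/p) * F p ω) + b * ((1/q) * F q ω) - (1/(a*p+b*q)) * F (a*p+b*q) ω with hsdef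
    have hs_nonneg : ∀ ω, 0 ≤ s ω := by
      intro ω
      have h := (hGconv ω).2 hp.1 hq.1 ha.le hb.le hab
      simp only [smul_eq_mul] at h
      simp only [hsdef]
      linarith
    have hs_pos : ∀ ω, 0 < X ω → 0 < s ω := by
      intro ω hω
      have h := (hGsconv ω hω).2 hp.1 hq.1 hpq ha hb hab
      simp only [smul_eq_mul] at h
      simp only [hsdef]
      linarith
    have hs_int : Integrable s μ := by
      rw [hsdef]
      exact (((hGint p hp).const_mul a).add ((hGint q hq).const_mul b)).sub
        (hGint _ hcomb_mem)
    have hs_pos_int : 0 < ∫ ω, s ω ∂μ := by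
      rw [integral_pos_iff_support_of_nonneg (fun ω => hs_nonneg ω) hs_int]
      refine lt_of_lt_of_le hXpos (measure_mono ?_)
      intro ω hω
      exact (hs_pos ω hω).ne'
    have e1 : ∫ ω, a * ((1/p) * F p ω) ∂μ = a * gfun μ X L y p := by
      rw [integral_const_mul, integral_const_mul, hgfun]
    have e2 : ∫ ω, b * ((1/q) * F q ω) ∂μ = b * gfun μ X L y q := by
      rw [integral_const_mul, integral_const_mul, hgfun]
    have e3 : ∫ ω, (1/(a*p+b*q)) * F (a*p+b*q) ω ∂μ = gfun μ X L y (a*p+b*q) := by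
      rw [integral_const_mul, hgfun]
    have hIeq : ∫ ω, s ω ∂μ
        = a * gfun μ X L y p + b * gfun μ X L y q - gfun μ X L y (a*p+b*q) := by
      simp only [hsdef]
      have hint1 : Integrable (fun ω => a * (1/p * F p ω) + b * (1/q * F q ω)) μ :=
        ((hGint p hp).const_mul a).add ((hGint q hq).const_mul b)
      rw [integral_sub hint1 (hGint _ hcomb_mem),
        integral_add ((hGint p hp).const_mul a) ((hGint q hq).const_mul b), e1, e2, e3]
    rw [hIeq] at hs_pos_int
    linarith
  -- continuity
  have hIcont : ContinuousOn (fun x => ∫ ω, F x ω ∂μ) (Ioc 0 ymax) := by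
    apply continuousOn_of_dominated (bound := X)
    · exact fun x _ => (hFmeas x).aestronglyMeasurable
    · intro x hx
      filter_upwards with ω
      rw [Real.norm_eq_abs, abs_of_nonneg (hFnn x ω)]
      exact hFle x hx.2 ω
    · exact hXint
    · filter_upwards with ω
      apply Continuous.continuousOn
      simp only [hFdef]
      exact (continuous_const.mul
        (Real.continuous_exp.comp (continuous_id.mul continuous_const))).div_const _
  have hgcont : ContinuousOn (gfun μ X L y) (Ioc 0 ymax) := by
    have h1 : ContinuousOn (fun x : ℝ => 1/x) (Ioc 0 ymax) :=
      ContinuousOn.div continuousOn_const continuousOn_id (fun x hx => ne_of_gt hx.1)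
    exact (h1.mul hIcont).congr (fun x _ => hgfun x)
  -- blowup at 0
  have hXDnn : ∀ ω, 0 ≤ X ω / D ω := fun ω => div_nonneg (hXnn ω) (hDpos ω).le
  have hXDint : Integrable (fun ω => X ω / D ω) μ := by
    refine hXint.mono ((hXmeas.div hDmeas).aestronglyMeasurable) ?_
    filter_upwards with ω
    rw [Real.norm_eq_abs, Real.norm_eq_abs, abs_of_nonneg (hXDnn ω), abs_of_nonneg (hXnn ω)]
    exact div_le_self (hXnn ω) (hD1 ω)
  have hc0 : 0 < ∫ ω, X ω / D ω ∂μ := by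
    rw [integral_pos_iff_support_of_nonneg (fun ω => hXDnn ω) hXDint]
    refine lt_of_lt_of_le hXpos (measure_mono ?_)
    intro ω hω
    exact ne_of_gt (div_pos hω (hDpos ω))
  have hblow : Tendsto (gfun μ X L y) (𝓝[>] (0:ℝ)) atTop := by
    refine tendsto_atTop_mono' _ ?_
      (Tendsto.const_mul_atTop hc0 tendsto_inv_nhdsGT_zero)
    filter_upwards [Ioo_mem_nhdsGT_of_mem ⟨le_refl (0:ℝ), hymax_pos⟩] with x hx
    rw [hgfun x]
    have hmono : ∫ ω, X ω / D ω ∂μ ≤ ∫ ω, F x ω ∂μ := by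
      refine integral_mono hXDint (hFint x hx.2.le) (fun ω => ?_)
      simp only [hFdef]
      exact (div_le_div_iff_of_pos_right (hDpos ω)).2
        (le_mul_of_one_le_right (hXnn ω) (Real.one_le_exp (mul_nonneg hx.1.le (hXnn ω))))
    have hx0 : 0 < x := hx.1
    have hxinv : 0 ≤ x⁻¹ := by positivity
    calc (∫ ω, X ω / D ω ∂μ) * x⁻¹ ≤ (∫ ω, F x ω ∂μ) * x⁻¹ :=
        mul_le_mul_of_nonneg_right hmono hxinv
    _ = 1/x * ∫ ω, F x ω ∂μ := by rw [one_div]; ring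
  -- epsilon
  have hEps : ∃ ε : ℝ, 0 < ε ∧ 0 < μ {ω | ε ≤ X ω} := by
    by_contra hcon
    push_neg at hcon
    have hz : ∀ n : ℕ, μ {ω | 1/((n:ℝ)+1) ≤ X ω} = 0 := by
      intro n
      exact le_antisymm (hcon (1/((n:ℝ)+1)) (by positivity)) zero_le
    have hsub : {ω | 0 < X ω} ⊆ ⋃ n : ℕ, {ω | 1/((n:ℝ)+1) ≤ X ω} := by
      intro ω hω
      obtain ⟨n, hn⟩ := exists_nat_one_div_lt (K := ℝ) (hω : 0 < X ω)
      exact mem_iUnion.2 ⟨n, hn.le⟩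
    have h7 := (measure_mono hsub).trans (measure_iUnion_null hz).le
    exact absurd (le_antisymm h7 zero_le) hXpos.ne'
  obtain ⟨ε, hε, hδ⟩ := hEps
  have hδtop : μ {ω | ε ≤ X ω} ≠ ⊤ := measure_ne_top μ _
  have hL' : (0:ℝ) < L := by exact_mod_cast hL
  have key : ∀ x : ℝ, ymax ≤ x → 0 < x →
      ENNReal.ofReal ((1/x) * (ε * Real.exp ((x - ymax)*ε) / L)) * μ {ω | ε ≤ X ω} ≤
      ENNReal.ofReal (1/x) *
        ∫⁻ ω, ENNReal.ofReal
          (X ω * Real.exp (x * X ω) / ∑ j : Fin L, Real.exp (y j * X ω)) ∂μ := by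
    intro x hyx hx
    simp only [← hFD]
    have hpt : ∀ ω ∈ {ω | ε ≤ X ω}, ε * Real.exp ((x - ymax)*ε) / L ≤ F x ω := by
      intro ω hω
      have hXω : ε ≤ X ω := hω
      have hXω0 : 0 ≤ X ω := hXnn ω
      have hstep1 : D ω ≤ L * Real.exp (ymax * X ω) := by
        calc D ω ≤ ∑ _j : Fin L, Real.exp (ymax * X ω) :=
          Finset.sum_le_sum (fun j _ =>
            Real.exp_le_exp.2 (mul_le_mul_of_nonneg_right (hymax_ub j) hXω0))
        _ = L * Real.exp (ymax * X ω) := by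
          simp [Finset.sum_const, Finset.card_univ, nsmul_eq_mul]
      have hstep2 : ε * Real.exp ((x - ymax)*ε) / L ≤ X ω * Real.exp ((x - ymax)*X ω) / L := by
        gcongr
        all_goals first
          | exact hXω
          | exact sub_nonneg.2 hyx
          | exact mul_le_mul_of_nonneg_left hXω (sub_nonneg.2 hyx)
      have hstep3 : X ω * Real.exp ((x - ymax)*X ω) / (L:ℝ)
          = X ω * Real.exp (x * X ω) / (L * Real.exp (ymax * X ω)) := by
        rw [show (x - ymax)*X ω = x*X ω - ymax*X ω by ring, Real.exp_sub]
        field_simp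
      have hstep4 : X ω * Real.exp (x * X ω) / (L * Real.exp (ymax * X ω))
          ≤ X ω * Real.exp (x * X ω) / D ω := by
        gcongr
        all_goals first
          | exact hDpos ω
          | exact mul_nonneg hXω0 (Real.exp_pos _).le
          | exact hstep1
      calc ε * Real.exp ((x - ymax)*ε) / L ≤ _ := hstep2
      _ = _ := hstep3
      _ ≤ X ω * Real.exp (x * X ω) / D ω := hstep4
      _ = F x ω := by rw [hFdef]
    have hlow : ENNReal.ofReal (ε * Real.exp ((x - ymax)*ε) / L) * μ {ω | ε ≤ X ω}
        ≤ ∫⁻ ω, ENNReal.ofReal (F x ω) ∂μ := by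
      calc ENNReal.ofReal (ε * Real.exp ((x - ymax)*ε) / L) * μ {ω | ε ≤ X ω}
          = ∫⁻ ω in {ω | ε ≤ X ω}, ENNReal.ofReal (ε * Real.exp ((x - ymax)*ε) / L) ∂μ :=
            (setLIntegral_const _ _).symm
      _ ≤ ∫⁻ ω in {ω | ε ≤ X ω}, ENNReal.ofReal (F x ω) ∂μ :=
            setLIntegral_mono (ENNReal.measurable_ofReal.comp (hFmeas x))
              (fun ω hω => ENNReal.ofReal_le_ofReal (hpt ω hω))
      _ ≤ ∫⁻ ω, ENNReal.ofReal (F x ω) ∂μ := setLIntegral_le_lintegral _ _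
    rw [ENNReal.ofReal_mul (by positivity : (0:ℝ) ≤ 1/x), mul_assoc]
    exact mul_le_mul_right hlow _
  have hfinal : Tendsto (fun x : ℝ =>
      ENNReal.ofReal (1 / x) *
        ∫⁻ ω, ENNReal.ofReal
          (X ω * Real.exp (x * X ω) / ∑ j : Fin L, Real.exp (y j * X ω)) ∂μ)
      atTop (𝓝 (⊤ : ENNReal)) := by
    have hreal : Tendsto (fun x : ℝ => (1/x) * (ε * Real.exp ((x - ymax)*ε) / L)) atTop atTop := by
      have hE1 : Tendsto (fun x : ℝ => Real.exp (ε*x) / (ε*x)^1) atTop atTop :=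
        (Real.tendsto_exp_div_pow_atTop 1).comp (tendsto_id.const_mul_atTop hε)
      have hE2 : Tendsto (fun x : ℝ => ε * (Real.exp (ε*x) / (ε*x)^1)) atTop atTop :=
        hE1.const_mul_atTop hε
      have hE : Tendsto (fun x : ℝ => Real.exp (ε*x) / x) atTop atTop := by
        apply hE2.congr'
        filter_upwards [eventually_gt_atTop (0:ℝ)] with x hx
        rw [pow_one]
        field_simp
      have hC : (0:ℝ) < ε * Real.exp (-(ymax*ε)) / L := by positivity
      apply (hE.const_mul_atTop hC).congr'
      filter_upwards [eventually_gt_atTop (0:ℝ)] with x hx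
      rw [show (x - ymax)*ε = ε*x + -(ymax*ε) by ring, Real.exp_add]
      field_simp
    have h5 := ENNReal.tendsto_ofReal_atTop.comp hreal
    have h6 := ENNReal.Tendsto.mul_const (b := μ {ω | ε ≤ X ω}) h5 (Or.inl (by simp : (⊤:ENNReal) ≠ 0))
    rw [ENNReal.top_mul hδ.ne'] at h6
    apply tendsto_nhds_top_mono h6
    filter_upwards [eventually_ge_atTop (max ymax 1)] with x hx
    exact key x ((le_max_left _ _).trans hx)
      (lt_of_lt_of_le one_pos ((le_max_right _ _).trans hx))
  exact ⟨hgs.convexOn, hgcont, aux_tri hymax_pos hgs hgcont hblow, hblow, hfinal⟩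
end

section
/- Let W be a nonnegative real random variable with 0<E[W]<∞, let q≥2 be an integer, β>0, β'=e^β−1, and let B=(B_1,…,B_q) be a field with all B_i≥0. For y∈ℝ^q set G(y) = E[log(∑_{k=1}^q exp(β'·y_k·W/E[W]+B_k))] − (β'/(2E[W]))·∑_{k=1}^q y_k², and for a maximizer y of G over ℝ^q define g_{y,B}(x) = (1/x)·E[ W·exp(x·β'W/E[W]) / ∑_{j=1}^q exp(y_j·β'W/E[W]+B_j) ] on (0, y_max], where y_max = max_i y_i, and let x_*(y,B) be the minimizer of g_{y,B} on (0, y_max]. Then there exists ε>0 (depending only on β, q and the law of W) such that whenever 0 ≤ max_{i} B_i < ε, every maximizer y of G over ℝ^q has at most one coordinate y_i with y_i > x_*(y,B). -/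
open MeasureTheory Filter Topology Set

/-- The functional whose maximizers give the annealed pressure of the Potts model
on rank-1 random graphs:
`G(y) = E[log ∑_k exp(β'·y_k·W/E[W] + B_k)] − (β'/(2E[W]))·∑_k y_k²` with `β' = e^β − 1`. -/
noncomputable def pottsG {Ω : Type*} [MeasurableSpace Ω] (μ : Measure Ω)
    (W : Ω → ℝ) (q : ℕ) (β : ℝ) (B : Fin q → ℝ) (y : Fin q → ℝ) : ℝ :=
  (∫ ω, Real.log (∑ k : Fin q,
      Real.exp ((Real.exp β - 1) * y k * W ω / (∫ ω', W ω' ∂μ) + B k)) ∂μ)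
    - (Real.exp β - 1) / (2 * ∫ ω', W ω' ∂μ) * ∑ k : Fin q, (y k) ^ 2

/-- The auxiliary function
`g_{y,B}(x) = (1/x)·E[W·exp(x·β'·W/E[W]) / ∑_j exp(y_j·β'·W/E[W] + B_j)]`. -/
noncomputable def pottsg {Ω : Type*} [MeasurableSpace Ω] (μ : Measure Ω)
    (W : Ω → ℝ) (q : ℕ) (β : ℝ) (B : Fin q → ℝ) (y : Fin q → ℝ) (x : ℝ) : ℝ :=
  (1 / x) * ∫ ω, W ω * Real.exp (x * (Real.exp β - 1) * W ω / (∫ ω', W ω' ∂μ)) /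
      ∑ j : Fin q, Real.exp (y j * (Real.exp β - 1) * W ω / (∫ ω', W ω' ∂μ) + B j) ∂μ

namespace PottsProof

/-! ### Scalar convexity lemmas for `x ↦ exp (a x) / x` -/

noncomputable def eqt (a x : ℝ) : ℝ := Real.exp (a * x) / x

noncomputable def eqt' (a x : ℝ) : ℝ := Real.exp (a * x) * (a * x - 1) / x ^ 2

lemma hasDerivAt_exp_mul (a x : ℝ) :
    HasDerivAt (fun y : ℝ => Real.exp (a * y)) (Real.exp (a * x) * a) x := by
  have h1 : HasDerivAt (fun y : ℝ => a * y) a x := by simpa using (hasDerivAt_id x).const_mul a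
  exact h1.exp

lemma hasDerivAt_eqt {a x : ℝ} (hx : x ≠ 0) : HasDerivAt (eqt a) (eqt' a x) x := by
  have h := (hasDerivAt_exp_mul a x).div (hasDerivAt_id x) hx
  refine h.congr_deriv ?_
  unfold eqt'
  simp only [id]
  field_simp

lemma hasDerivAt_eqt' {a x : ℝ} (hx : x ≠ 0) :
    HasDerivAt (eqt' a) (Real.exp (a * x) * ((a * x) ^ 2 - 2 * (a * x) + 2) / x ^ 3) x := by
  have h1 : HasDerivAt (fun y : ℝ => Real.exp (a * y) * (a * y - 1))
      (Real.exp (a * x) * a * (a * x - 1) + Real.exp (a * x) * a) x :=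
    (hasDerivAt_exp_mul a x).mul (by simpa using ((hasDerivAt_id x).const_mul a).sub_const 1)
  have h2 : HasDerivAt (fun y : ℝ => y ^ 2) (2 * x) x := by
    simpa using hasDerivAt_pow 2 x
  have h := h1.div h2 (pow_ne_zero 2 hx)
  refine h.congr_deriv ?_
  field_simp
  ring

lemma eqt_deriv2 {a x : ℝ} (hx : 0 < x) :
    deriv^[2] (eqt a) x = Real.exp (a * x) * ((a * x) ^ 2 - 2 * (a * x) + 2) / x ^ 3 := by
  have hev : deriv (eqt a) =ᶠ[nhds x] eqt' a := by
    filter_upwards [IsOpen.mem_nhds isOpen_compl_singleton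
      (by simpa using hx.ne' : x ∈ ({(0:ℝ)}ᶜ : Set ℝ))] with z hz
    exact (hasDerivAt_eqt (by simpa using hz)).deriv
  have : deriv (deriv (eqt a)) x = deriv (eqt' a) x := hev.deriv_eq
  simp only [Function.iterate_succ, Function.iterate_zero, Function.comp_apply, Function.id_def]
  rw [this, (hasDerivAt_eqt' hx.ne').deriv]

lemma eqt_strictConvexOn {a : ℝ} : StrictConvexOn ℝ (Ioi (0:ℝ)) (eqt a) := by
  apply strictConvexOn_of_deriv2_pos (convex_Ioi 0)
  · apply ContinuousOn.div
    · exact (Real.continuous_exp.comp (continuous_const.mul continuous_id)).continuousOn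
    · exact continuousOn_id
    · exact fun x hx => ne_of_gt hx
  · intro x hx
    rw [interior_Ioi] at hx
    rw [eqt_deriv2 hx]
    have h1 : (0:ℝ) < (a * x) ^ 2 - 2 * (a * x) + 2 := by nlinarith [sq_nonneg (a * x - 1)]
    have h2 : (0:ℝ) < Real.exp (a * x) := Real.exp_pos _
    have h3 : (0:ℝ) < x ^ 3 := pow_pos hx 3
    exact div_pos (mul_pos h2 h1) h3

lemma eqt_tangent {a u v : ℝ} (hu : 0 < u) (huv : u < v) :
    eqt a v - eqt a u ≤ eqt' a v * (v - u) := by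
  have hv : 0 < v := hu.trans huv
  have h := eqt_strictConvexOn.convexOn.slope_le_of_hasDerivAt (f' := eqt' a v)
    (Set.mem_Ioi.mpr hu) (Set.mem_Ioi.mpr hv) huv (hasDerivAt_eqt hv.ne')
  rw [slope_def_field] at h
  rw [div_le_iff₀ (by linarith)] at h
  linarith [h]

/-! ### Scalar inequalities -/

lemma exp_mul_le {p s : ℝ} (hp0 : 0 ≤ p) (hp1 : p ≤ 1) :
    Real.exp (p * s) ≤ 1 - p + p * Real.exp s := by
  have h := convexOn_exp.2 (Set.mem_univ (0:ℝ)) (Set.mem_univ s)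
    (by linarith : (0:ℝ) ≤ 1 - p) hp0 (by ring)
  simpa using h

lemma le_log_of_exp_le {c x : ℝ} (h : Real.exp c ≤ x) : c ≤ Real.log x := by
  calc c = Real.log (Real.exp c) := (Real.log_exp c).symm
    _ ≤ Real.log x := Real.log_le_log (Real.exp_pos c) h

lemma log_one_add_ge {u : ℝ} (hu : 0 ≤ u) : u * (1 - u) ≤ Real.log (1 + u) := by
  have h1 : (0:ℝ) < 1 + u := by linarith
  have h2 : Real.log (1 + u)⁻¹ ≤ (1 + u)⁻¹ - 1 :=
    Real.log_le_sub_one_of_pos (by positivity)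
  rw [Real.log_inv] at h2
  have h3 : u / (1 + u) ≤ Real.log (1 + u) := by
    have he : (1 + u)⁻¹ - 1 = -(u / (1+u)) := by field_simp; ring
    rw [he] at h2
    linarith
  refine le_trans ?_ h3
  rw [le_div_iff₀ h1]
  nlinarith [sq_nonneg u, mul_nonneg (mul_nonneg hu hu) hu]

lemma sq_le_exp_add_exp_neg (s : ℝ) : s ^ 2 ≤ Real.exp s + Real.exp (-s) - 2 := by
  wlog hs : 0 ≤ s with H
  · have := H (-s) (by linarith [le_of_not_ge hs])
    simpa [neg_neg, add_comm] using this
  have h1 : s / 2 ≤ Real.sinh (s / 2) := Real.self_le_sinh_iff.mpr (by linarith)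
  have h2 : Real.sinh (s/2) = (Real.exp (s/2) - Real.exp (-(s/2))) / 2 := Real.sinh_eq _
  have h3 : Real.exp (s/2) * Real.exp (-(s/2)) = 1 := by
    rw [← Real.exp_add]; simp
  have h4 : Real.exp (s/2) * Real.exp (s/2) = Real.exp s := by
    rw [← Real.exp_add]; ring_nf
  have h5 : Real.exp (-(s/2)) * Real.exp (-(s/2)) = Real.exp (-s) := by
    rw [← Real.exp_add]; ring_nf
  nlinarith [h1, Real.exp_pos (s/2), Real.exp_pos (-(s/2))]

lemma exp_add_exp_neg_mono {s S : ℝ} (hs : 0 ≤ s) (hsS : s ≤ S) :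
    Real.exp s + Real.exp (-s) ≤ Real.exp S + Real.exp (-S) := by
  have h1 : Real.exp s ≤ Real.exp S := Real.exp_le_exp.mpr hsS
  have h2 : Real.exp (-s) - Real.exp (-S) = Real.exp (-s-S) * (Real.exp S - Real.exp s) := by
    rw [mul_sub, ← Real.exp_add, ← Real.exp_add]; ring_nf
  have h3 : Real.exp (-s-S) ≤ 1 := by
    rw [show (1:ℝ) = Real.exp 0 by simp]
    exact Real.exp_le_exp.mpr (by linarith)
  nlinarith [Real.exp_pos (-s-S), Real.exp_pos (-s), Real.exp_pos (-S)]

lemma exp_add_exp_neg_ge_two (s : ℝ) : 2 ≤ Real.exp s + Real.exp (-s) := by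
  nlinarith [Real.add_one_le_exp s, Real.add_one_le_exp (-s)]

/-! ### Core definitions -/

noncomputable def pden {Ω : Type*} [MeasurableSpace Ω] (μ : Measure Ω)
    (W : Ω → ℝ) (q : ℕ) (β : ℝ) (B : Fin q → ℝ) (z : Fin q → ℝ) (ω : Ω) : ℝ :=
  ∑ j : Fin q, Real.exp (z j * (Real.exp β - 1) * W ω / (∫ ω', W ω' ∂μ) + B j)

noncomputable def pnum {Ω : Type*} [MeasurableSpace Ω] (μ : Measure Ω)
    (W : Ω → ℝ) (β : ℝ) (x : ℝ) (ω : Ω) : ℝ :=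
  Real.exp (x * (Real.exp β - 1) * W ω / (∫ ω', W ω' ∂μ))

variable {Ω : Type*} [MeasurableSpace Ω] {μ : Measure Ω} {W : Ω → ℝ} {q : ℕ} {β : ℝ}
  {B : Fin q → ℝ}

lemma pottsg_eq (y : Fin q → ℝ) (x : ℝ) :
    pottsg μ W q β B y x
      = (1/x) * ∫ ω, W ω * pnum μ W β x ω / pden μ W q β B y ω ∂μ := rfl

lemma pden_pos (hq : 0 < q) (z : Fin q → ℝ) (ω : Ω) : 0 < pden μ W q β B z ω := by
  haveI : Nonempty (Fin q) := ⟨⟨0, hq⟩⟩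
  exact Finset.sum_pos (fun j _ => Real.exp_pos _) Finset.univ_nonempty

lemma term_le_pden (z : Fin q → ℝ) (k : Fin q) (ω : Ω) :
    Real.exp (z k * (Real.exp β - 1) * W ω / (∫ ω', W ω' ∂μ) + B k)
      ≤ pden μ W q β B z ω := by
  unfold pden
  exact Finset.single_le_sum (f := fun j : Fin q =>
    Real.exp (z j * (Real.exp β - 1) * W ω / (∫ ω', W ω' ∂μ) + B j))
    (fun j _ => (Real.exp_pos _).le) (Finset.mem_univ k)

lemma exists_eq_iSup (hq : 0 < q) (z : Fin q → ℝ) : ∃ m : Fin q, z m = ⨆ i, z i := by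
  haveI : Nonempty (Fin q) := ⟨⟨0, hq⟩⟩
  obtain ⟨m, hm⟩ := Finite.exists_max z
  refine ⟨m, le_antisymm (le_ciSup (Set.Finite.bddAbove (Set.finite_range z)) m) ?_⟩
  exact ciSup_le hm

lemma le_iSup' (z : Fin q → ℝ) (k : Fin q) : z k ≤ ⨆ i, z i :=
  le_ciSup (Set.Finite.bddAbove (Set.finite_range z)) k

lemma beta'_pos (hβ : 0 < β) : (0:ℝ) < Real.exp β - 1 := by
  have : (1:ℝ) < Real.exp β := by
    rw [show (1:ℝ) = Real.exp 0 by simp]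
    exact Real.exp_lt_exp.mpr hβ
  linarith

lemma pnum_le_pden (hWnn : ∀ ω, 0 ≤ W ω) (hEW : 0 < ∫ ω, W ω ∂μ) (hβ : 0 < β)
    (hBnn : ∀ i, 0 ≤ B i) (hq : 0 < q) (z : Fin q → ℝ) {x : ℝ} (hx : x ≤ ⨆ i, z i)
    (ω : Ω) : pnum μ W β x ω ≤ pden μ W q β B z ω := by
  obtain ⟨m, hm⟩ := exists_eq_iSup hq z
  have hβ' : (0:ℝ) ≤ Real.exp β - 1 := (beta'_pos hβ).le
  refine le_trans ?_ (term_le_pden z m ω)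
  rw [pnum]
  apply Real.exp_le_exp.mpr
  have hxz : x ≤ z m := hm ▸ hx
  have h1 : x * (Real.exp β - 1) * W ω ≤ z m * (Real.exp β - 1) * W ω :=
    mul_le_mul_of_nonneg_right (mul_le_mul_of_nonneg_right hxz hβ') (hWnn ω)
  have h2 : x * (Real.exp β - 1) * W ω / (∫ ω', W ω' ∂μ)
      ≤ z m * (Real.exp β - 1) * W ω / (∫ ω', W ω' ∂μ) :=
    div_le_div_of_nonneg_right h1 hEW.le
  linarith [hBnn m, h2]

lemma pden_meas (hWmeas : Measurable W) (z : Fin q → ℝ) :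
    Measurable (pden μ W q β B z) := by
  apply Finset.measurable_sum
  intro j _
  exact Real.measurable_exp.comp (((hWmeas.const_mul _).div_const _).add_const _)

lemma pnum_meas (hWmeas : Measurable W) (x : ℝ) : Measurable (pnum μ W β x) :=
  Real.measurable_exp.comp ((hWmeas.const_mul _).div_const _)

lemma pg_integrand_nonneg (hWnn : ∀ ω, 0 ≤ W ω) (hq : 0 < q) (z : Fin q → ℝ) (x : ℝ)
    (ω : Ω) : 0 ≤ W ω * pnum μ W β x ω / pden μ W q β B z ω :=
  div_nonneg (mul_nonneg (hWnn ω) (Real.exp_pos _).le) (pden_pos hq z ω).le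

lemma pg_integrand_le_W (hWnn : ∀ ω, 0 ≤ W ω) (hEW : 0 < ∫ ω, W ω ∂μ) (hβ : 0 < β)
    (hBnn : ∀ i, 0 ≤ B i) (hq : 0 < q) (z : Fin q → ℝ) {x : ℝ} (hx : x ≤ ⨆ i, z i)
    (ω : Ω) : W ω * pnum μ W β x ω / pden μ W q β B z ω ≤ W ω := by
  rw [div_le_iff₀ (pden_pos hq z ω)]
  exact mul_le_mul_of_nonneg_left (pnum_le_pden hWnn hEW hβ hBnn hq z hx ω) (hWnn ω)

lemma pg_integrand_meas (hWmeas : Measurable W) (z : Fin q → ℝ) (x : ℝ) :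
    Measurable (fun ω => W ω * pnum μ W β x ω / pden μ W q β B z ω) :=
  (hWmeas.mul (pnum_meas hWmeas x)).div (pden_meas hWmeas z)

lemma pg_integrable (hWmeas : Measurable W) (hWnn : ∀ ω, 0 ≤ W ω)
    (hWint : Integrable W μ) (hEW : 0 < ∫ ω, W ω ∂μ) (hβ : 0 < β)
    (hBnn : ∀ i, 0 ≤ B i) (hq : 0 < q) (z : Fin q → ℝ) {x : ℝ} (hx : x ≤ ⨆ i, z i) :
    Integrable (fun ω => W ω * pnum μ W β x ω / pden μ W q β B z ω) μ := by
  refine hWint.mono (pg_integrand_meas hWmeas z x).aestronglyMeasurable (ae_of_all _ fun ω => ?_)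
  rw [Real.norm_eq_abs, Real.norm_eq_abs,
    abs_of_nonneg (pg_integrand_nonneg hWnn hq z x ω), abs_of_nonneg (hWnn ω)]
  exact pg_integrand_le_W hWnn hEW hβ hBnn hq z hx ω

lemma suppW_pos (hWnn : ∀ ω, 0 ≤ W ω) (hWint : Integrable W μ)
    (hEW : 0 < ∫ ω, W ω ∂μ) : 0 < μ (Function.support W) :=
  (integral_pos_iff_support_of_nonneg hWnn hWint).mp hEW

lemma pg_integral_pos (hWmeas : Measurable W) (hWnn : ∀ ω, 0 ≤ W ω)
    (hWint : Integrable W μ) (hEW : 0 < ∫ ω, W ω ∂μ) (hβ : 0 < β)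
    (hBnn : ∀ i, 0 ≤ B i) (hq : 0 < q) (z : Fin q → ℝ) {x : ℝ} (hx : x ≤ ⨆ i, z i) :
    0 < ∫ ω, W ω * pnum μ W β x ω / pden μ W q β B z ω ∂μ := by
  rw [integral_pos_iff_support_of_nonneg (pg_integrand_nonneg hWnn hq z x)
    (pg_integrable hWmeas hWnn hWint hEW hβ hBnn hq z hx)]
  refine lt_of_lt_of_le (suppW_pos hWnn hWint hEW) (measure_mono ?_)
  intro ω hω
  simp only [Function.mem_support] at hω ⊢
  have hden := pden_pos (μ := μ) (W := W) (β := β) (B := B) hq z ω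
  have hnum := Real.exp_pos (x * (Real.exp β - 1) * W ω / (∫ ω', W ω' ∂μ))
  have hWpos : 0 < W ω := lt_of_le_of_ne (hWnn ω) (Ne.symm hω)
  have hpos : 0 < W ω * pnum μ W β x ω / pden μ W q β B z ω :=
    div_pos (mul_pos hWpos hnum) hden
  exact hpos.ne'

lemma pottsG_eq (z : Fin q → ℝ) :
    pottsG μ W q β B z = (∫ ω, Real.log (pden μ W q β B z ω) ∂μ)
      - (Real.exp β - 1) / (2 * ∫ ω', W ω' ∂μ) * ∑ k : Fin q, (z k) ^ 2 := by
  unfold pottsG pden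
  simp only [show ∀ (k : Fin q) (ω : Ω), (Real.exp β - 1) * z k * W ω
    = z k * (Real.exp β - 1) * W ω from fun k ω => by ring]

lemma log_pden_integrable (hWmeas : Measurable W) (hWnn : ∀ ω, 0 ≤ W ω)
    (hWint : Integrable W μ) [IsProbabilityMeasure μ] (hEW : 0 < ∫ ω, W ω ∂μ)
    (hq : 0 < q) (z : Fin q → ℝ) :
    Integrable (fun ω => Real.log (pden μ W q β B z ω)) μ := by
  set E := ∫ ω', W ω' ∂μ with hE
  set L : ℝ := (∑ j : Fin q, |z j|) * |Real.exp β - 1| / E with hL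
  set C : ℝ := Real.log q + ∑ j : Fin q, |B j| with hC
  have hLnn : 0 ≤ L := by
    apply div_nonneg _ hEW.le
    exact mul_nonneg (Finset.sum_nonneg fun j _ => abs_nonneg _) (abs_nonneg _)
  have hCnn : 0 ≤ C := by
    have : (0:ℝ) ≤ Real.log q := Real.log_nonneg (by exact_mod_cast hq)
    have h2 : (0:ℝ) ≤ ∑ j : Fin q, |B j| := Finset.sum_nonneg fun j _ => abs_nonneg _
    linarith
  have key : ∀ ω, |Real.log (pden μ W q β B z ω)| ≤ L * W ω + C := by
    intro ω
    have habs : ∀ j : Fin q, |z j * (Real.exp β - 1) * W ω / E + B j|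
        ≤ L * W ω + ∑ j : Fin q, |B j| := by
      intro j
      have h1 : |z j * (Real.exp β - 1) * W ω / E| ≤ L * W ω := by
        rw [abs_div, abs_mul, abs_mul, abs_of_nonneg (hWnn ω), abs_of_nonneg hEW.le]
        rw [hL, div_mul_eq_mul_div]
        apply div_le_div_of_nonneg_right _ hEW.le
        have h0 : |z j| ≤ ∑ j : Fin q, |z j| :=
          Finset.single_le_sum (f := fun j : Fin q => |z j|)
            (fun j _ => abs_nonneg _) (Finset.mem_univ j)
        exact mul_le_mul_of_nonneg_right
          (mul_le_mul_of_nonneg_right h0 (abs_nonneg _)) (hWnn ω)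
      have h2 : |B j| ≤ ∑ j : Fin q, |B j| :=
        Finset.single_le_sum (f := fun j : Fin q => |B j|)
          (fun j _ => abs_nonneg _) (Finset.mem_univ j)
      calc |z j * (Real.exp β - 1) * W ω / E + B j|
          ≤ |z j * (Real.exp β - 1) * W ω / E| + |B j| := abs_add_le _ _
        _ ≤ L * W ω + ∑ j : Fin q, |B j| := add_le_add h1 h2
    rw [abs_le]
    constructor
    · have j0 : Fin q := ⟨0, hq⟩
      have h1 : Real.exp (z j0 * (Real.exp β - 1) * W ω / E + B j0)
          ≤ pden μ W q β B z ω :=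
        Finset.single_le_sum (f := fun j : Fin q =>
          Real.exp (z j * (Real.exp β - 1) * W ω / E + B j))
          (fun j _ => (Real.exp_pos _).le) (Finset.mem_univ j0)
      have h2 : z j0 * (Real.exp β - 1) * W ω / E + B j0
          ≤ Real.log (pden μ W q β B z ω) := le_log_of_exp_le h1
      have h3 := habs j0
      rw [abs_le] at h3
      have h4 : Real.log q ≥ 0 := Real.log_nonneg (by exact_mod_cast hq)
      rw [hC]
      linarith [h3.1, h2]
    · have h1 : pden μ W q β B z ω ≤ q * Real.exp (L * W ω + ∑ j : Fin q, |B j|) := by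
        rw [pden]
        calc ∑ j : Fin q, Real.exp (z j * (Real.exp β - 1) * W ω / E + B j)
            ≤ ∑ _j : Fin q, Real.exp (L * W ω + ∑ j : Fin q, |B j|) := by
              apply Finset.sum_le_sum
              intro j _
              apply Real.exp_le_exp.mpr
              have := habs j
              rw [abs_le] at this
              exact this.2
          _ = q * Real.exp (L * W ω + ∑ j : Fin q, |B j|) := by
              simp [Finset.sum_const, nsmul_eq_mul]
      have h2 : Real.log (pden μ W q β B z ω)
          ≤ Real.log (q * Real.exp (L * W ω + ∑ j : Fin q, |B j|)) :=
        Real.log_le_log (pden_pos hq z ω) h1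
      rw [Real.log_mul (by exact_mod_cast hq.ne' : (q:ℝ) ≠ 0) (Real.exp_pos _).ne',
        Real.log_exp] at h2
      rw [hC]
      linarith
  refine Integrable.mono (g := fun ω => L * W ω + C)
    ((hWint.const_mul L).add (integrable_const C))
    ((pden_meas hWmeas z).log.aestronglyMeasurable) (ae_of_all _ fun ω => ?_)
  rw [Real.norm_eq_abs, Real.norm_eq_abs]
  have h := key ω
  have h0 : 0 ≤ L * W ω + C := by
    have := mul_nonneg hLnn (hWnn ω)
    linarith
  rw [abs_of_nonneg h0]
  exact h

/-! ### update lemmas -/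

lemma sum_sq_update (z : Fin q → ℝ) (k : Fin q) (v : ℝ) :
    ∑ j : Fin q, (Function.update z k v j) ^ 2 = (∑ j : Fin q, z j ^ 2) + v ^ 2 - z k ^ 2 := by
  have h1 : ∀ j, (Function.update z k v j) ^ 2
      = Function.update (fun j => z j ^ 2) k (v ^ 2) j := fun j =>
    Function.apply_update (fun _ x => x ^ 2) z k v j
  simp only [h1]
  rw [Finset.sum_update_of_mem (Finset.mem_univ k),
    ← Finset.add_sum_erase _ _ (Finset.mem_univ k), Finset.erase_eq]
  ring

lemma pden_update (z : Fin q → ℝ) (k : Fin q) (v : ℝ) (ω : Ω) :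
    pden μ W q β B (Function.update z k v) ω = pden μ W q β B z ω
      + Real.exp (v * (Real.exp β - 1) * W ω / (∫ ω', W ω' ∂μ) + B k)
      - Real.exp (z k * (Real.exp β - 1) * W ω / (∫ ω', W ω' ∂μ) + B k) := by
  unfold pden
  have h1 : ∀ j, Real.exp (Function.update z k v j * (Real.exp β - 1) * W ω
        / (∫ ω', W ω' ∂μ) + B j)
      = Function.update (fun j => Real.exp (z j * (Real.exp β - 1) * W ω
        / (∫ ω', W ω' ∂μ) + B j)) k
        (Real.exp (v * (Real.exp β - 1) * W ω / (∫ ω', W ω' ∂μ) + B k)) j := fun j =>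
    Function.apply_update (fun j x => Real.exp (x * (Real.exp β - 1) * W ω
      / (∫ ω', W ω' ∂μ) + B j)) z k v j
  simp only [h1]
  rw [Finset.sum_update_of_mem (Finset.mem_univ k),
    ← Finset.add_sum_erase _ _ (Finset.mem_univ k), Finset.erase_eq]
  ring

/-! ### Stationarity at a maximizer -/

lemma stationarity (hWmeas : Measurable W) (hWnn : ∀ ω, 0 ≤ W ω)
    (hWint : Integrable W μ) [IsProbabilityMeasure μ] (hEW : 0 < ∫ ω, W ω ∂μ)
    (hβ : 0 < β) (hBnn : ∀ i, 0 ≤ B i) (hq : 0 < q) {y : Fin q → ℝ}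
    (hmax : ∀ z, pottsG μ W q β B z ≤ pottsG μ W q β B y) (k : Fin q) :
    Real.exp (B k) * (∫ ω, W ω * pnum μ W β (y k) ω / pden μ W q β B y ω ∂μ) = y k := by
  have hcpos : 0 < Real.exp β - 1 := beta'_pos hβ
  set E := ∫ ω', W ω' ∂μ with hE
  set c := Real.exp β - 1 with hc
  set f : Ω → ℝ := fun ω => W ω * pnum μ W β (y k) ω / pden μ W q β B y ω with hf
  set II := ∫ ω, f ω ∂μ with hII
  set A := Real.exp (B k) * II with hA
  have key : ∀ t : ℝ, t * A ≤ y k * t + t ^ 2 / 2 := by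
    intro t
    set z := Function.update y k (y k + t) with hz
    have hpt : ∀ ω, (Real.exp (B k) * (t * c / E)) * f ω
        ≤ Real.log (pden μ W q β B z ω) - Real.log (pden μ W q β B y ω) := by
      intro ω
      set D := pden μ W q β B y ω with hD
      have hDpos : 0 < D := pden_pos hq y ω
      set Tk := Real.exp (y k * c * W ω / E + B k) with hTk
      have hTkpos : 0 < Tk := Real.exp_pos _
      have hTkle : Tk ≤ D := term_le_pden y k ω
      set p := Tk / D with hp
      have hp0 : 0 ≤ p := div_nonneg hTkpos.le hDpos.le
      have hp1 : p ≤ 1 := (div_le_one hDpos).mpr hTkle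
      set s := t * c * W ω / E with hs
      have hzden : pden μ W q β B z ω = D + Tk * (Real.exp s - 1) := by
        rw [hz, pden_update]
        have harg : (y k + t) * c * W ω / E + B k
            = (y k * c * W ω / E + B k) + s := by
          rw [hs]; ring
        rw [harg, Real.exp_add]
        ring
      have hpdz_pos : 0 < pden μ W q β B z ω := pden_pos hq z ω
      have hratio : pden μ W q β B z ω / D = 1 + p * (Real.exp s - 1) := by
        rw [hzden, hp]
        field_simp
      have hexp : Real.exp (p * s) ≤ 1 + p * (Real.exp s - 1) := by
        have := exp_mul_le (s := s) hp0 hp1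
        linarith
      have hlog : p * s ≤ Real.log (pden μ W q β B z ω) - Real.log (pden μ W q β B y ω) := by
        have h1 : p * s ≤ Real.log (pden μ W q β B z ω / D) :=
          le_log_of_exp_le (by rw [hratio]; exact hexp)
        rw [Real.log_div hpdz_pos.ne' hDpos.ne'] at h1
        exact h1
      have hTk_split : Tk = pnum μ W β (y k) ω * Real.exp (B k) := by
        rw [hTk, pnum, ← Real.exp_add]
      have hform : (Real.exp (B k) * (t * c / E)) * f ω = p * s := by
        rw [hf, hp, hs, hTk_split]
        have hDne : pden μ W q β B y ω ≠ 0 := (pden_pos hq y ω).ne'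
        rw [hD]
        field_simp
      rw [hform]
      exact hlog
    have hfint : Integrable f μ :=
      pg_integrable hWmeas hWnn hWint hEW hβ hBnn hq y (le_iSup' y k)
    have hlhs_int : Integrable (fun ω => (Real.exp (B k) * (t * c / E)) * f ω) μ :=
      hfint.const_mul _
    have hlogz : Integrable (fun ω => Real.log (pden μ W q β B z ω)) μ :=
      log_pden_integrable hWmeas hWnn hWint hEW hq z
    have hlogy : Integrable (fun ω => Real.log (pden μ W q β B y ω)) μ :=
      log_pden_integrable hWmeas hWnn hWint hEW hq y
    have hmono := integral_mono hlhs_int (hlogz.sub hlogy) hpt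
    rw [integral_const_mul] at hmono
    simp only [Pi.sub_apply] at hmono
    rw [integral_sub hlogz hlogy] at hmono
    have hGz := hmax z
    rw [pottsG_eq z, pottsG_eq y] at hGz
    have hsum : ∑ j : Fin q, (z j) ^ 2 = (∑ j : Fin q, (y j) ^ 2) + (y k + t) ^ 2 - y k ^ 2 := by
      rw [hz]
      exact sum_sq_update y k (y k + t)
    have hchain : (Real.exp (B k) * (t * c / E)) * II
        ≤ c / (2 * E) * (2 * y k * t + t ^ 2) := by
      have h2 : c / (2 * E) * (∑ j : Fin q, (z j) ^ 2)
          - c / (2 * E) * (∑ j : Fin q, (y j) ^ 2)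
          = c / (2 * E) * (2 * y k * t + t ^ 2) := by
        rw [hsum]; ring
      linarith [hmono, hGz]
    have hcE : 0 < c / E := div_pos hcpos hEW
    have h1 : (Real.exp (B k) * (t * c / E)) * II = (c / E) * (t * A) := by
      rw [hA]; ring
    have h2 : c / (2 * E) * (2 * y k * t + t ^ 2) = (c / E) * (y k * t + t ^ 2 / 2) := by
      ring
    rw [h1, h2] at hchain
    exact (mul_le_mul_iff_of_pos_left hcE).mp hchain
  have hk := key (A - y k)
  have hsq : (A - y k) ^ 2 ≤ 0 := by nlinarith [hk]
  have hz0 : A - y k = 0 := sq_eq_zero_iff.mp (le_antisymm hsq (sq_nonneg _))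
  rw [hA] at hz0
  linarith [hz0]

lemma y_pos (hWmeas : Measurable W) (hWnn : ∀ ω, 0 ≤ W ω)
    (hWint : Integrable W μ) [IsProbabilityMeasure μ] (hEW : 0 < ∫ ω, W ω ∂μ)
    (hβ : 0 < β) (hBnn : ∀ i, 0 ≤ B i) (hq : 0 < q) {y : Fin q → ℝ}
    (hmax : ∀ z, pottsG μ W q β B z ≤ pottsG μ W q β B y) (k : Fin q) : 0 < y k := by
  rw [← stationarity hWmeas hWnn hWint hEW hβ hBnn hq hmax k]
  exact mul_pos (Real.exp_pos _)
    (pg_integral_pos hWmeas hWnn hWint hEW hβ hBnn hq y (le_iSup' y k))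

lemma pottsg_at_coord (hWmeas : Measurable W) (hWnn : ∀ ω, 0 ≤ W ω)
    (hWint : Integrable W μ) [IsProbabilityMeasure μ] (hEW : 0 < ∫ ω, W ω ∂μ)
    (hβ : 0 < β) (hBnn : ∀ i, 0 ≤ B i) (hq : 0 < q) {y : Fin q → ℝ}
    (hmax : ∀ z, pottsG μ W q β B z ≤ pottsG μ W q β B y) (k : Fin q) :
    pottsg μ W q β B y (y k) = Real.exp (-(B k)) := by
  have hst := stationarity hWmeas hWnn hWint hEW hβ hBnn hq hmax k
  have hyk : 0 < y k := y_pos hWmeas hWnn hWint hEW hβ hBnn hq hmax k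
  have hII : (∫ ω, W ω * pnum μ W β (y k) ω / pden μ W q β B y ω ∂μ)
      = y k * Real.exp (-(B k)) := by
    rw [Real.exp_neg]
    field_simp
    linarith [hst]
  rw [pottsg_eq, hII]
  field_simp

/-! ### `pottsg` as an integral of convex functions, and strict monotonicity -/

lemma phi_eq (y : Fin q → ℝ) (x : ℝ) :
    (fun ω => (W ω / pden μ W q β B y ω)
        * eqt ((Real.exp β - 1) * W ω / (∫ ω', W ω' ∂μ)) x)
      = fun ω => (1/x) * (W ω * pnum μ W β x ω / pden μ W q β B y ω) := by
  funext ω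
  unfold eqt pnum
  have harg : (Real.exp β - 1) * W ω / (∫ ω', W ω' ∂μ) * x
      = x * (Real.exp β - 1) * W ω / (∫ ω', W ω' ∂μ) := by ring
  rw [harg]
  ring

lemma phi_integrable (hWmeas : Measurable W) (hWnn : ∀ ω, 0 ≤ W ω)
    (hWint : Integrable W μ) (hEW : 0 < ∫ ω, W ω ∂μ) (hβ : 0 < β)
    (hBnn : ∀ i, 0 ≤ B i) (hq : 0 < q) (y : Fin q → ℝ) {x : ℝ} (hx : x ≤ ⨆ i, y i) :
    Integrable (fun ω => (W ω / pden μ W q β B y ω)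
      * eqt ((Real.exp β - 1) * W ω / (∫ ω', W ω' ∂μ)) x) μ := by
  rw [phi_eq]
  exact (pg_integrable hWmeas hWnn hWint hEW hβ hBnn hq y hx).const_mul _

lemma pottsg_as_integral (y : Fin q → ℝ) (x : ℝ) :
    pottsg μ W q β B y x = ∫ ω, (W ω / pden μ W q β B y ω)
      * eqt ((Real.exp β - 1) * W ω / (∫ ω', W ω' ∂μ)) x ∂μ := by
  rw [pottsg_eq, ← integral_const_mul]
  rw [phi_eq]

lemma pottsg_strictMonoOn (hWmeas : Measurable W) (hWnn : ∀ ω, 0 ≤ W ω)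
    (hWint : Integrable W μ) (hEW : 0 < ∫ ω, W ω ∂μ) (hβ : 0 < β)
    (hBnn : ∀ i, 0 ≤ B i) (hq : 0 < q) (y : Fin q → ℝ) {xs a b : ℝ}
    (hxs : xs ∈ Ioc (0:ℝ) (⨆ i, y i))
    (hmin : ∀ x ∈ Ioc (0:ℝ) (⨆ i, y i), pottsg μ W q β B y xs ≤ pottsg μ W q β B y x)
    (ha : xs < a) (hab : a < b) (hble : b ≤ ⨆ i, y i) :
    pottsg μ W q β B y a < pottsg μ W q β B y b := by
  by_contra hcon
  push_neg at hcon
  have hxs0 : 0 < xs := hxs.1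
  have ha0 : 0 < a := hxs0.trans ha
  have hb0 : 0 < b := ha0.trans hab
  have hale : a ≤ ⨆ i, y i := le_trans hab.le hble
  set t := (b - a) / (b - xs) with ht
  have hbxs : 0 < b - xs := by linarith
  have ht0 : 0 < t := div_pos (by linarith) hbxs
  have ht1 : t < 1 := by
    rw [ht, div_lt_one hbxs]
    linarith
  have hcomb : a = t * xs + (1 - t) * b := by
    rw [ht]
    field_simp
    ring
  set aw : Ω → ℝ := fun ω => (Real.exp β - 1) * W ω / (∫ ω', W ω' ∂μ) with haw
  set w : Ω → ℝ := fun ω => W ω / pden μ W q β B y ω with hw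
  set fxs : Ω → ℝ := fun ω => w ω * eqt (aw ω) xs with hfxs
  set fa : Ω → ℝ := fun ω => w ω * eqt (aw ω) a with hfa
  set fb : Ω → ℝ := fun ω => w ω * eqt (aw ω) b with hfb
  have hixs : Integrable fxs μ := phi_integrable hWmeas hWnn hWint hEW hβ hBnn hq y hxs.2
  have hia : Integrable fa μ := phi_integrable hWmeas hWnn hWint hEW hβ hBnn hq y hale
  have hib : Integrable fb μ := phi_integrable hWmeas hWnn hWint hEW hβ hBnn hq y hble
  set Gap : Ω → ℝ := fun ω => t * fxs ω + (1 - t) * fb ω - fa ω with hGap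
  have hGapnn : ∀ ω, 0 ≤ Gap ω := by
    intro ω
    have hwnn : 0 ≤ w ω := div_nonneg (hWnn ω) (pden_pos hq y ω).le
    have hcvx : eqt (aw ω) a ≤ t * eqt (aw ω) xs + (1 - t) * eqt (aw ω) b := by
      have h := (eqt_strictConvexOn (a := aw ω)).convexOn.2
        (Set.mem_Ioi.mpr hxs0) (Set.mem_Ioi.mpr hb0) ht0.le
        (show (0:ℝ) ≤ 1 - t by linarith) (show t + (1 - t) = 1 by ring)
      rw [smul_eq_mul, smul_eq_mul, smul_eq_mul, smul_eq_mul] at h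
      rw [hcomb]
      exact h
    have := mul_le_mul_of_nonneg_left hcvx hwnn
    simp only [hGap, hfxs, hfa, hfb]
    nlinarith [this]
  have hGapint : Integrable Gap μ := ((hixs.const_mul t).add (hib.const_mul (1-t))).sub hia
  have hGappos : 0 < ∫ ω, Gap ω ∂μ := by
    rw [integral_pos_iff_support_of_nonneg hGapnn hGapint]
    refine lt_of_lt_of_le (suppW_pos hWnn hWint hEW) (measure_mono ?_)
    intro ω hω
    simp only [Function.mem_support] at hω ⊢
    have hWpos : 0 < W ω := lt_of_le_of_ne (hWnn ω) (Ne.symm hω)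
    have hwpos : 0 < w ω := div_pos hWpos (pden_pos hq y ω)
    have hstrict : eqt (aw ω) a < t * eqt (aw ω) xs + (1 - t) * eqt (aw ω) b := by
      have h := (eqt_strictConvexOn (a := aw ω)).2
        (Set.mem_Ioi.mpr hxs0) (Set.mem_Ioi.mpr hb0) (show xs ≠ b by linarith)
        ht0 (show (0:ℝ) < 1 - t by linarith) (show t + (1 - t) = 1 by ring)
      rw [smul_eq_mul, smul_eq_mul, smul_eq_mul, smul_eq_mul] at h
      rw [hcomb]
      exact h
    have hGlt : 0 < Gap ω := by
      simp only [hGap, hfxs, hfa, hfb]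
      nlinarith [mul_lt_mul_of_pos_left hstrict hwpos]
    exact hGlt.ne'
  have e1 : Integrable (fun ω => t * fxs ω + (1 - t) * fb ω) μ :=
    (hixs.const_mul t).add (hib.const_mul (1-t))
  have e2 : (∫ ω, (t * fxs ω + (1 - t) * fb ω) - fa ω ∂μ)
      = (∫ ω, t * fxs ω + (1 - t) * fb ω ∂μ) - ∫ ω, fa ω ∂μ := integral_sub e1 hia
  have e3 := integral_add (hixs.const_mul t) (hib.const_mul (1 - t))
  rw [integral_const_mul, integral_const_mul] at e3
  have hint_eq : ∫ ω, Gap ω ∂μ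
      = t * (∫ ω, fxs ω ∂μ) + (1 - t) * (∫ ω, fb ω ∂μ) - ∫ ω, fa ω ∂μ := by
    rw [hGap]
    rw [show (fun ω => t * fxs ω + (1 - t) * fb ω - fa ω)
      = fun ω => (t * fxs ω + (1 - t) * fb ω) - fa ω from rfl]
    rw [e2, e3]
  have hga : pottsg μ W q β B y a = ∫ ω, fa ω ∂μ := pottsg_as_integral y a
  have hgxs : pottsg μ W q β B y xs = ∫ ω, fxs ω ∂μ := pottsg_as_integral y xs
  have hgb : pottsg μ W q β B y b = ∫ ω, fb ω ∂μ := pottsg_as_integral y b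
  have hmin_a : pottsg μ W q β B y xs ≤ pottsg μ W q β B y a :=
    hmin a ⟨ha0, hale⟩
  rw [hint_eq] at hGappos
  rw [hga, hgb] at hcon
  rw [hgxs, hga] at hmin_a
  nlinarith [hGappos, mul_le_mul_of_nonneg_left hmin_a ht0.le,
    mul_le_mul_of_nonneg_left hcon (show (0:ℝ) ≤ 1 - t by linarith)]

/-! ### Swap argument: ordering of maximizer coordinates matches ordering of fields -/

lemma swap_contradiction (hWmeas : Measurable W) (hWnn : ∀ ω, 0 ≤ W ω)
    (hWint : Integrable W μ) [IsProbabilityMeasure μ] (hEW : 0 < ∫ ω, W ω ∂μ)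
    (hβ : 0 < β) (hq : 0 < q) {y : Fin q → ℝ}
    (hmax : ∀ z, pottsG μ W q β B z ≤ pottsG μ W q β B y) {i j : Fin q} (hij : i ≠ j)
    (hyij : y i < y j) (hBji : B j < B i) : False := by
  have hcpos : 0 < Real.exp β - 1 := beta'_pos hβ
  set E := ∫ ω', W ω' ∂μ with hE
  set c := Real.exp β - 1 with hc
  set y1 := Function.update y i (y j) with hy1
  set z := Function.update y1 j (y i) with hz
  have hy1j : y1 j = y j := Function.update_of_ne (Ne.symm hij) _ _
  have hy1i : y1 i = y j := Function.update_self _ _ _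
  have hpden_z : ∀ ω, pden μ W q β B z ω = pden μ W q β B y ω
      + (pnum μ W β (y j) ω - pnum μ W β (y i) ω) * (Real.exp (B i) - Real.exp (B j)) := by
    intro ω
    have h1 := pden_update (μ := μ) (W := W) (β := β) (B := B) y i (y j) ω
    have h2 := pden_update (μ := μ) (W := W) (β := β) (B := B) y1 j (y i) ω
    rw [← hy1] at h1
    rw [← hz] at h2
    rw [h2, h1, hy1j]
    have hsplit : ∀ (x : ℝ) (k : Fin q), Real.exp (x * c * W ω / E + B k)
        = pnum μ W β x ω * Real.exp (B k) := by
      intro x k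
      rw [pnum, ← Real.exp_add]
    rw [hsplit (y j) i, hsplit (y i) i, hsplit (y i) j, hsplit (y j) j]
    ring
  have hnum_le : ∀ ω, pnum μ W β (y i) ω ≤ pnum μ W β (y j) ω := by
    intro ω
    apply Real.exp_le_exp.mpr
    apply div_le_div_of_nonneg_right _ hEW.le
    exact mul_le_mul_of_nonneg_right (mul_le_mul_of_nonneg_right hyij.le hcpos.le) (hWnn ω)
  have hBexp : Real.exp (B j) ≤ Real.exp (B i) := Real.exp_le_exp.mpr hBji.le
  have hge : ∀ ω, pden μ W q β B y ω ≤ pden μ W q β B z ω := by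
    intro ω
    rw [hpden_z ω]
    have := mul_nonneg (sub_nonneg.mpr (hnum_le ω)) (sub_nonneg.mpr hBexp)
    linarith
  set Dg : Ω → ℝ := fun ω =>
    Real.log (pden μ W q β B z ω) - Real.log (pden μ W q β B y ω) with hDg
  have hDgnn : ∀ ω, 0 ≤ Dg ω := by
    intro ω
    have := Real.log_le_log (pden_pos hq y ω) (hge ω)
    simp only [hDg]
    linarith
  have hDgint : Integrable Dg μ :=
    (log_pden_integrable hWmeas hWnn hWint hEW hq z).sub
      (log_pden_integrable hWmeas hWnn hWint hEW hq y)
  have hDgpos : 0 < ∫ ω, Dg ω ∂μ := by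
    rw [integral_pos_iff_support_of_nonneg hDgnn hDgint]
    refine lt_of_lt_of_le (suppW_pos hWnn hWint hEW) (measure_mono ?_)
    intro ω hω
    simp only [Function.mem_support] at hω ⊢
    have hWpos : 0 < W ω := lt_of_le_of_ne (hWnn ω) (Ne.symm hω)
    have hnum_lt : pnum μ W β (y i) ω < pnum μ W β (y j) ω := by
      apply Real.exp_lt_exp.mpr
      apply div_lt_div_of_pos_right _ hEW
      exact mul_lt_mul_of_pos_right (mul_lt_mul_of_pos_right hyij hcpos) hWpos
    have hlt : pden μ W q β B y ω < pden μ W q β B z ω := by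
      rw [hpden_z ω]
      have := mul_pos (sub_pos.mpr hnum_lt) (sub_pos.mpr (Real.exp_lt_exp.mpr hBji))
      linarith
    have : 0 < Dg ω := by
      simp only [hDg]
      have := Real.log_lt_log (pden_pos hq y ω) hlt
      linarith
    exact this.ne'
  have hsumsq : ∑ k : Fin q, (z k) ^ 2 = ∑ k : Fin q, (y k) ^ 2 := by
    have s1 := sum_sq_update y i (y j)
    have s2 := sum_sq_update y1 j (y i)
    rw [← hy1] at s1
    rw [← hz] at s2
    rw [s2, s1, hy1j]
    ring
  have hGz := hmax z
  rw [pottsG_eq z, pottsG_eq y, hsumsq] at hGz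
  have hILog : (∫ ω, Dg ω ∂μ) = (∫ ω, Real.log (pden μ W q β B z ω) ∂μ)
      - ∫ ω, Real.log (pden μ W q β B y ω) ∂μ := by
    simp only [hDg]
    exact integral_sub (log_pden_integrable hWmeas hWnn hWint hEW hq z)
      (log_pden_integrable hWmeas hWnn hWint hEW hq y)
  linarith [hDgpos, hGz, hILog]

/-! ### Truncated second-moment bound -/

lemma wsq_integrand_eq (y : Fin q → ℝ) (v : ℝ) (hv : v ≠ 0)
    (hEW : 0 < ∫ ω, W ω ∂μ) (hq : 0 < q) (ω : Ω) :
    (W ω / pden μ W q β B y ω) * eqt' ((Real.exp β - 1) * W ω / (∫ ω', W ω' ∂μ)) v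
      = ((Real.exp β - 1) / (v * ∫ ω', W ω' ∂μ))
          * (W ω ^ 2 * pnum μ W β v ω / pden μ W q β B y ω)
        - (1 / v ^ 2) * (W ω * pnum μ W β v ω / pden μ W q β B y ω) := by
  have hD : pden μ W q β B y ω ≠ 0 := (pden_pos hq y ω).ne'
  unfold eqt' pnum
  rw [show (Real.exp β - 1) * W ω / (∫ ω', W ω' ∂μ) * v
    = v * (Real.exp β - 1) * W ω / (∫ ω', W ω' ∂μ) from by ring]
  field_simp


lemma wsq_integrableOn (hWmeas : Measurable W) (hWnn : ∀ ω, 0 ≤ W ω)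
    (hWint : Integrable W μ) (hEW : 0 < ∫ ω, W ω ∂μ) (hβ : 0 < β)
    (hBnn : ∀ i, 0 ≤ B i) (hq : 0 < q) (y : Fin q → ℝ) {v : ℝ} (hvle : v ≤ ⨆ k, y k)
    (M : ℕ) :
    IntegrableOn (fun ω => W ω ^ 2 * pnum μ W β v ω / pden μ W q β B y ω)
      {ω | W ω ≤ (M:ℝ)} μ := by
  have hsM : MeasurableSet {ω | W ω ≤ (M:ℝ)} := hWmeas measurableSet_Iic
  apply Integrable.mono (g := fun ω => (M:ℝ) * W ω)
    (hWint.restrict.const_mul _)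
    (((hWmeas.pow_const 2).mul (pnum_meas hWmeas v)).div
        (pden_meas hWmeas y)).aestronglyMeasurable
  rw [ae_restrict_iff' hsM]
  apply ae_of_all
  intro ω hω
  simp only [Set.mem_setOf_eq] at hω
  have hbase : W ω * pnum μ W β v ω / pden μ W q β B y ω ≤ W ω :=
    pg_integrand_le_W hWnn hEW hβ hBnn hq y hvle ω
  have hsqnn : 0 ≤ W ω ^ 2 * pnum μ W β v ω / pden μ W q β B y ω := by
    apply div_nonneg _ (pden_pos hq y ω).le
    exact mul_nonneg (sq_nonneg _) (Real.exp_pos _).le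
  have hsq : W ω ^ 2 * pnum μ W β v ω / pden μ W q β B y ω ≤ (M:ℝ) * W ω := by
    have hform : W ω ^ 2 * pnum μ W β v ω / pden μ W q β B y ω
        = W ω * (W ω * pnum μ W β v ω / pden μ W q β B y ω) := by ring
    rw [hform]
    calc W ω * (W ω * pnum μ W β v ω / pden μ W q β B y ω)
        ≤ W ω * W ω := mul_le_mul_of_nonneg_left hbase (hWnn ω)
      _ ≤ (M:ℝ) * W ω := mul_le_mul_of_nonneg_right hω (hWnn ω)
  rw [Real.norm_eq_abs, Real.norm_eq_abs, abs_of_nonneg (a := ((fun x => W x ^ 2) * pnum μ W β v / pden μ W q β B y) ω) hsqnn,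
    abs_of_nonneg (mul_nonneg (Nat.cast_nonneg M) (hWnn ω))]
  exact hsq

lemma truncated_bound (hWmeas : Measurable W) (hWnn : ∀ ω, 0 ≤ W ω)
    (hWint : Integrable W μ) [IsProbabilityMeasure μ] (hEW : 0 < ∫ ω, W ω ∂μ)
    (hβ : 0 < β) (hBnn : ∀ i, 0 ≤ B i) (hq : 0 < q) {y : Fin q → ℝ}
    (hmax : ∀ z, pottsG μ W q β B z ≤ pottsG μ W q β B y) {xs : ℝ}
    (hxs : xs ∈ Ioc (0:ℝ) (⨆ i, y i))
    (hmin : ∀ x ∈ Ioc (0:ℝ) (⨆ i, y i), pottsg μ W q β B y xs ≤ pottsg μ W q β B y x)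
    {i : Fin q} (hvgt : xs < y i) :
    ∃ M : ℕ, 1 < ((Real.exp β - 1) / (∫ ω', W ω' ∂μ)) * Real.exp (B i)
      * ∫ ω in {ω | W ω ≤ (M:ℝ)},
          W ω ^ 2 * pnum μ W β (y i) ω / pden μ W q β B y ω ∂μ := by
  have hcpos : 0 < Real.exp β - 1 := beta'_pos hβ
  set E := ∫ ω', W ω' ∂μ with hE
  set c := Real.exp β - 1 with hc
  set v := y i with hv
  have hv0 : 0 < v := y_pos hWmeas hWnn hWint hEW hβ hBnn hq hmax i
  have hvle : v ≤ ⨆ k, y k := le_iSup' y i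
  set u := (xs + v) / 2 with hu
  have hxu : xs < u := by rw [hu]; linarith
  have huv : u < v := by rw [hu]; linarith
  have hu0 : 0 < u := hxs.1.trans hxu
  have hule : u ≤ ⨆ k, y k := le_trans huv.le hvle
  have hδpos : 0 < pottsg μ W q β B y v - pottsg μ W q β B y u :=
    sub_pos.mpr (pottsg_strictMonoOn hWmeas hWnn hWint hEW hβ hBnn hq y hxs hmin hxu huv hvle)
  set δ := pottsg μ W q β B y v - pottsg μ W q β B y u with hδ
  set aw : Ω → ℝ := fun ω => c * W ω / E with haw
  set wgt : Ω → ℝ := fun ω => W ω / pden μ W q β B y ω with hwgt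
  set fu : Ω → ℝ := fun ω => wgt ω * eqt (aw ω) u with hfu
  set fv : Ω → ℝ := fun ω => wgt ω * eqt (aw ω) v with hfv
  have hiu : Integrable fu μ := phi_integrable hWmeas hWnn hWint hEW hβ hBnn hq y hule
  have hiv : Integrable fv μ := phi_integrable hWmeas hWnn hWint hEW hβ hBnn hq y hvle
  set h1 : Ω → ℝ := fun ω => (c / (v * E)) * (W ω ^ 2 * pnum μ W β v ω / pden μ W q β B y ω)
    with hh1
  set h2 : Ω → ℝ := fun ω => (1 / v ^ 2) * (W ω * pnum μ W β v ω / pden μ W q β B y ω)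
    with hh2
  have hih2 : Integrable h2 μ :=
    (pg_integrable hWmeas hWnn hWint hEW hβ hBnn hq y hvle).const_mul _
  -- the pointwise tangent inequality
  have hpt : ∀ ω, fv ω - fu ω ≤ (v - u) * (h1 ω - h2 ω) := by
    intro ω
    have hwnn : 0 ≤ wgt ω := div_nonneg (hWnn ω) (pden_pos hq y ω).le
    have ht := eqt_tangent (a := aw ω) hu0 huv
    have h := mul_le_mul_of_nonneg_left ht hwnn
    have heqf : wgt ω * eqt' (aw ω) v = h1 ω - h2 ω :=
      wsq_integrand_eq y v hv0.ne' hEW hq ω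
    simp only [hfv, hfu]
    calc wgt ω * eqt (aw ω) v - wgt ω * eqt (aw ω) u
        = wgt ω * (eqt (aw ω) v - eqt (aw ω) u) := by ring
      _ ≤ wgt ω * (eqt' (aw ω) v * (v - u)) := h
      _ = (v - u) * (wgt ω * eqt' (aw ω) v) := by ring
      _ = (v - u) * (h1 ω - h2 ω) := by rw [heqf]
  -- truncation sets
  set s : ℕ → Set Ω := fun M => {ω | W ω ≤ (M:ℝ)} with hs
  have hsmeas : ∀ M, MeasurableSet (s M) := fun M => hWmeas measurableSet_Iic
  have hsmono : Monotone s := by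
    intro M N hMN ω hω
    simp only [hs, Set.mem_setOf_eq] at hω ⊢
    exact le_trans hω (by exact_mod_cast hMN)
  have hsU : (⋃ M, s M) = Set.univ := by
    ext ω
    simp only [hs, Set.mem_iUnion, Set.mem_setOf_eq, Set.mem_univ, iff_true]
    exact exists_nat_ge (W ω)
  -- integrability of h1 on s M
  have hih1 : ∀ M : ℕ, IntegrableOn h1 (s M) μ := by
    intro M
    exact (wsq_integrableOn hWmeas hWnn hWint hEW hβ hBnn hq y hvle M).const_mul _
  -- limits
  have hδint : (∫ ω, (fv ω - fu ω) ∂μ) = δ := by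
    rw [integral_sub hiv hiu, hδ, pottsg_as_integral y v, pottsg_as_integral y u]
  have hT1 : Tendsto (fun M : ℕ => ∫ ω in s M, (fv ω - fu ω) ∂μ) atTop (nhds δ) := by
    have := tendsto_setIntegral_of_monotone hsmeas hsmono
      ((hiv.sub hiu).integrableOn (s := ⋃ M, s M))
    simp only [Pi.sub_apply] at this
    rw [hsU, Measure.restrict_univ, hδint] at this
    exact this
  have hIh2 : (∫ ω, h2 ω ∂μ) = Real.exp (-(B i)) / v := by
    rw [hh2]
    rw [integral_const_mul]
    have hst := stationarity hWmeas hWnn hWint hEW hβ hBnn hq hmax i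
    have : (∫ ω, W ω * pnum μ W β (y i) ω / pden μ W q β B y ω ∂μ)
        = v * Real.exp (-(B i)) := by
      rw [Real.exp_neg]
      field_simp
      linarith [hst]
    rw [this]
    field_simp
  have hT2 : Tendsto (fun M : ℕ => ∫ ω in s M, h2 ω ∂μ) atTop
      (nhds (Real.exp (-(B i)) / v)) := by
    have := tendsto_setIntegral_of_monotone hsmeas hsmono
      (hih2.integrableOn (s := ⋃ M, s M))
    rw [hsU, Measure.restrict_univ, hIh2] at this
    exact this
  -- pick M
  have hvu : 0 < v - u := by linarith
  have hev1 : ∀ᶠ M : ℕ in atTop, δ / 2 < ∫ ω in s M, (fv ω - fu ω) ∂μ :=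
    hT1.eventually (eventually_gt_nhds (by linarith))
  have hev2 : ∀ᶠ M : ℕ in atTop,
      Real.exp (-(B i)) / v - δ / (4 * (v - u)) < ∫ ω in s M, h2 ω ∂μ :=
    hT2.eventually (eventually_gt_nhds (by
      have : 0 < δ / (4 * (v - u)) := by positivity
      linarith))
  obtain ⟨M, hM1, hM2⟩ := (hev1.and hev2).exists
  refine ⟨M, ?_⟩
  -- truncated tangent inequality
  have hstep : (∫ ω in s M, (fv ω - fu ω) ∂μ)
      ≤ (v - u) * ((∫ ω in s M, h1 ω ∂μ) - ∫ ω in s M, h2 ω ∂μ) := by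
    have hrw : (∫ ω in s M, (v - u) * (h1 ω - h2 ω) ∂μ)
        = (v - u) * ((∫ ω in s M, h1 ω ∂μ) - ∫ ω in s M, h2 ω ∂μ) := by
      rw [integral_const_mul, integral_sub (hih1 M) (hih2.integrableOn)]
    rw [← hrw]
    apply setIntegral_mono_on ((hiv.sub hiu).integrableOn)
      (((hih1 M).sub hih2.integrableOn).const_mul _) (hsmeas M)
    intro ω _
    exact hpt ω
  -- conclude
  have hK : (∫ ω in s M, h1 ω ∂μ)
      = (c / (v * E)) * ∫ ω in s M, W ω ^ 2 * pnum μ W β v ω / pden μ W q β B y ω ∂μ := by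
    rw [hh1, integral_const_mul]
  have hH1gt : Real.exp (-(B i)) / v < ∫ ω in s M, h1 ω ∂μ := by
    have h3 : δ / 2 ≤ (v - u) * ((∫ ω in s M, h1 ω ∂μ) - ∫ ω in s M, h2 ω ∂μ) :=
      le_trans hM1.le hstep
    have hexpand : (v - u) * (Real.exp (-(B i)) / v - δ / (4 * (v - u)))
        = (v - u) * (Real.exp (-(B i)) / v) - δ / 4 := by
      field_simp
    have h5 : (v - u) * (Real.exp (-(B i)) / v) - δ / 4
        < (v - u) * (∫ ω in s M, h2 ω ∂μ) := by
      rw [← hexpand]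
      exact mul_lt_mul_of_pos_left hM2 hvu
    have h3' : δ / 2 ≤ (v - u) * (∫ ω in s M, h1 ω ∂μ)
        - (v - u) * (∫ ω in s M, h2 ω ∂μ) := by
      rw [← mul_sub]
      exact h3
    have hfinal : (v - u) * (Real.exp (-(B i)) / v) < (v - u) * ∫ ω in s M, h1 ω ∂μ := by
      linarith [hδpos]
    exact lt_of_mul_lt_mul_left hfinal hvu.le
  rw [hK] at hH1gt
  have hmul := mul_lt_mul_of_pos_left hH1gt (mul_pos hv0 (Real.exp_pos (B i)))
  have hL : (v * Real.exp (B i)) * (Real.exp (-(B i)) / v) = 1 := by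
    rw [Real.exp_neg]
    field_simp
  have hR : (v * Real.exp (B i)) * ((c / (v * E))
      * ∫ ω in s M, W ω ^ 2 * pnum μ W β v ω / pden μ W q β B y ω ∂μ)
      = (c / E) * Real.exp (B i)
        * ∫ ω in s M, W ω ^ 2 * pnum μ W β v ω / pden μ W q β B y ω ∂μ := by
    field_simp
  rw [hL, hR] at hmul
  exact hmul

/-! ### Two equal coordinates above the minimizer are impossible -/

set_option maxHeartbeats 2000000 in
lemma equal_coords_contradiction (hWmeas : Measurable W) (hWnn : ∀ ω, 0 ≤ W ω)
    (hWint : Integrable W μ) [IsProbabilityMeasure μ] (hEW : 0 < ∫ ω, W ω ∂μ)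
    (hβ : 0 < β) (hBnn : ∀ i, 0 ≤ B i) (hq : 0 < q) {y : Fin q → ℝ}
    (hmax : ∀ z, pottsG μ W q β B z ≤ pottsG μ W q β B y) {xs : ℝ}
    (hxs : xs ∈ Ioc (0:ℝ) (⨆ i, y i))
    (hmin : ∀ x ∈ Ioc (0:ℝ) (⨆ i, y i), pottsg μ W q β B y xs ≤ pottsg μ W q β B y x)
    {i j : Fin q} (hij : i ≠ j) (hyeq : y i = y j) (hBeq : B i = B j)
    (hvgt : xs < y i) : False := by
  obtain ⟨M, hθ⟩ := truncated_bound hWmeas hWnn hWint hEW hβ hBnn hq hmax hxs hmin hvgt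
  have hcpos : 0 < Real.exp β - 1 := beta'_pos hβ
  set E := ∫ ω', W ω' ∂μ with hE
  set c := Real.exp β - 1 with hc
  set v := y i with hv
  have hv0 : 0 < v := y_pos hWmeas hWnn hWint hEW hβ hBnn hq hmax i
  have hvle : v ≤ ⨆ k, y k := le_iSup' y i
  set K := ∫ ω in {ω | W ω ≤ (M:ℝ)},
    W ω ^ 2 * pnum μ W β v ω / pden μ W q β B y ω ∂μ with hK
  set θ := (c / E) * Real.exp (B i) * K with hθdef
  have hθ1 : 1 < θ := hθ
  have hθpos : 0 < θ := by linarith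
  set ε0 := (θ - 1) / θ with hε0
  have hε0pos : 0 < ε0 := div_pos (by linarith) hθpos
  set r := c * (M:ℝ) / E with hr
  have hrnn : 0 ≤ r := div_nonneg (mul_nonneg hcpos.le (Nat.cast_nonneg M)) hEW.le
  -- pick a small positive t
  have hcont : Tendsto (fun t : ℝ => Real.exp (t * r) + Real.exp (-(t * r)) - 2)
      (nhds 0) (nhds 0) := by
    have hcts : Continuous fun t : ℝ => Real.exp (t * r) + Real.exp (-(t * r)) - 2 :=
      ((Real.continuous_exp.comp (continuous_id.mul continuous_const)).add
        (Real.continuous_exp.comp ((continuous_id.mul continuous_const).neg))).sub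
        continuous_const
    have h0 : Real.exp ((0:ℝ) * r) + Real.exp (-((0:ℝ) * r)) - 2 = 0 := by
      simp only [zero_mul, neg_zero, Real.exp_zero]
      norm_num
    have := hcts.tendsto 0
    simp only [zero_mul, neg_zero, Real.exp_zero] at this
    convert this using 2
    norm_num
  have hev : ∀ᶠ t in nhds (0:ℝ),
      Real.exp (t * r) + Real.exp (-(t * r)) - 2 < ε0 :=
    hcont.eventually (eventually_lt_nhds hε0pos)
  obtain ⟨t, htη, htpos⟩ :=
    (((hev.filter_mono (nhdsWithin_le_nhds (s := Set.Ioi (0:ℝ)))).and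
      eventually_mem_nhdsWithin).exists)
  rw [Set.mem_Ioi] at htpos
  set η := Real.exp (t * r) + Real.exp (-(t * r)) - 2 with hη
  have hηnn : 0 ≤ η := by
    have := exp_add_exp_neg_ge_two (t * r)
    rw [hη]; linarith
  have hηlt : η < ε0 := htη
  have hηlt1 : η < 1 := by
    have : ε0 < 1 := by
      rw [hε0, div_lt_one hθpos]; linarith
    linarith
  -- the competitor
  set y1 := Function.update y i (v + t) with hy1
  set z := Function.update y1 j (v - t) with hz
  have hy1j : y1 j = y j := Function.update_of_ne (Ne.symm hij) _ _
  have hvj : y j = v := hyeq.symm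
  have hpden_z : ∀ ω, pden μ W q β B z ω = pden μ W q β B y ω
      + (pnum μ W β v ω * Real.exp (B i))
        * (Real.exp (t * c * W ω / E) + Real.exp (-(t * c * W ω / E)) - 2) := by
    intro ω
    have h1 := pden_update (μ := μ) (W := W) (β := β) (B := B) y i (v + t) ω
    have h2 := pden_update (μ := μ) (W := W) (β := β) (B := B) y1 j (v - t) ω
    rw [← hy1] at h1
    rw [← hz] at h2
    rw [h2, h1, hy1j, hvj, ← hBeq, ← hv]
    have f1 : Real.exp ((v + t) * c * W ω / E + B i)
        = pnum μ W β v ω * Real.exp (B i) * Real.exp (t * c * W ω / E) := by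
      rw [pnum, ← Real.exp_add, ← Real.exp_add]
      congr 1
      ring
    have f2 : Real.exp ((v - t) * c * W ω / E + B i)
        = pnum μ W β v ω * Real.exp (B i) * Real.exp (-(t * c * W ω / E)) := by
      rw [pnum, ← Real.exp_add, ← Real.exp_add]
      congr 1
      ring
    have f3 : Real.exp (v * c * W ω / E + B i)
        = pnum μ W β v ω * Real.exp (B i) := by
      rw [pnum, ← Real.exp_add]
    rw [f1, f2, f3]
    ring
  set Dg : Ω → ℝ := fun ω =>
    Real.log (pden μ W q β B z ω) - Real.log (pden μ W q β B y ω) with hDg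
  set U : Ω → ℝ := fun ω => (pnum μ W β v ω * Real.exp (B i))
      * (Real.exp (t * c * W ω / E) + Real.exp (-(t * c * W ω / E)) - 2)
      / pden μ W q β B y ω with hU
  have hU0 : ∀ ω, 0 ≤ U ω := by
    intro ω
    apply div_nonneg _ (pden_pos hq y ω).le
    apply mul_nonneg (mul_nonneg (Real.exp_pos _).le (Real.exp_pos _).le)
    linarith [exp_add_exp_neg_ge_two (t * c * W ω / E)]
  have hDg_eq : ∀ ω, Dg ω = Real.log (1 + U ω) := by
    intro ω
    have hDpos := pden_pos (μ := μ) (W := W) (β := β) (B := B) hq y ω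
    have hzpos := pden_pos (μ := μ) (W := W) (β := β) (B := B) hq z ω
    have hratio : pden μ W q β B z ω / pden μ W q β B y ω = 1 + U ω := by
      rw [hpden_z ω, hU]
      field_simp
    simp only [hDg]
    rw [← Real.log_div hzpos.ne' hDpos.ne', hratio]
  have hDgnn : ∀ ω, 0 ≤ Dg ω := by
    intro ω
    rw [hDg_eq ω]
    have := hU0 ω
    have : (1:ℝ) ≤ 1 + U ω := by linarith
    exact Real.log_nonneg this
  have hDgint : Integrable Dg μ :=
    (log_pden_integrable hWmeas hWnn hWint hEW hq z).sub
      (log_pden_integrable hWmeas hWnn hWint hEW hq y)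
  -- pointwise lower bound on the truncation set
  set CC := (1 - η) * t ^ 2 * (c ^ 2 / E ^ 2) * Real.exp (B i) with hCC
  have hCCnn : 0 ≤ CC := by
    have h1 : 0 ≤ 1 - η := by linarith
    have h2 : (0:ℝ) ≤ c ^ 2 / E ^ 2 := by positivity
    have := Real.exp_pos (B i)
    apply mul_nonneg (mul_nonneg (mul_nonneg h1 (sq_nonneg t)) h2) this.le
  have hsM : MeasurableSet {ω | W ω ≤ (M:ℝ)} := hWmeas measurableSet_Iic
  have hptM : ∀ ω ∈ {ω | W ω ≤ (M:ℝ)},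
      CC * (W ω ^ 2 * pnum μ W β v ω / pden μ W q β B y ω) ≤ Dg ω := by
    intro ω hω
    simp only [Set.mem_setOf_eq] at hω
    set sω := t * c * W ω / E with hsω
    have hsnn : 0 ≤ sω := by
      apply div_nonneg _ hEW.le
      exact mul_nonneg (mul_nonneg htpos.le hcpos.le) (hWnn ω)
    have hsle : sω ≤ t * r := by
      rw [hsω, hr]
      rw [show t * (c * (M:ℝ) / E) = t * c * (M:ℝ) / E from by ring]
      apply div_le_div_of_nonneg_right _ hEW.le
      exact mul_le_mul_of_nonneg_left hω (mul_nonneg htpos.le hcpos.le)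
    have hfrac_le_one : pnum μ W β v ω * Real.exp (B i) / pden μ W q β B y ω ≤ 1 := by
      rw [div_le_one (pden_pos hq y ω)]
      have := term_le_pden (μ := μ) (W := W) (β := β) (B := B) y i ω
      have he : Real.exp (y i * c * W ω / E + B i)
          = pnum μ W β v ω * Real.exp (B i) := by
        rw [pnum, ← Real.exp_add, ← hv]
      rw [← he]
      exact this
    have hfrac_nn : 0 ≤ pnum μ W β v ω * Real.exp (B i) / pden μ W q β B y ω :=
      div_nonneg (mul_nonneg (Real.exp_pos _).le (Real.exp_pos _).le)
        (pden_pos hq y ω).le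
    have hUη : U ω ≤ η := by
      have hcosh : Real.exp sω + Real.exp (-sω) - 2 ≤ η := by
        have := exp_add_exp_neg_mono hsnn hsle
        rw [hη]; linarith
      have hUform : U ω = (pnum μ W β v ω * Real.exp (B i) / pden μ W q β B y ω)
          * (Real.exp sω + Real.exp (-sω) - 2) := by
        rw [hU]; ring
      rw [hUform]
      have hnn2 : 0 ≤ Real.exp sω + Real.exp (-sω) - 2 := by
        linarith [exp_add_exp_neg_ge_two sω]
      calc (pnum μ W β v ω * Real.exp (B i) / pden μ W q β B y ω)
            * (Real.exp sω + Real.exp (-sω) - 2)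
          ≤ 1 * (Real.exp sω + Real.exp (-sω) - 2) :=
            mul_le_mul_of_nonneg_right hfrac_le_one hnn2
        _ ≤ η := by linarith [hcosh]
    have hlow : (pnum μ W β v ω * Real.exp (B i) / pden μ W q β B y ω) * sω ^ 2
        ≤ U ω := by
      have hUform : U ω = (pnum μ W β v ω * Real.exp (B i) / pden μ W q β B y ω)
          * (Real.exp sω + Real.exp (-sω) - 2) := by
        rw [hU]; ring
      rw [hUform]
      exact mul_le_mul_of_nonneg_left (sq_le_exp_add_exp_neg sω) hfrac_nn
    have hlog : U ω * (1 - η) ≤ Dg ω := by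
      rw [hDg_eq ω]
      calc U ω * (1 - η) ≤ U ω * (1 - U ω) :=
            mul_le_mul_of_nonneg_left (by linarith [hUη]) (hU0 ω)
        _ ≤ Real.log (1 + U ω) := log_one_add_ge (hU0 ω)
    have hCCform : CC * (W ω ^ 2 * pnum μ W β v ω / pden μ W q β B y ω)
        = ((pnum μ W β v ω * Real.exp (B i) / pden μ W q β B y ω) * sω ^ 2)
          * (1 - η) := by
      rw [hCC, hsω]
      field_simp
    rw [hCCform]
    calc ((pnum μ W β v ω * Real.exp (B i) / pden μ W q β B y ω) * sω ^ 2) * (1 - η)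
        ≤ U ω * (1 - η) :=
          mul_le_mul_of_nonneg_right hlow (by linarith)
      _ ≤ Dg ω := hlog
  -- integrate
  have hbint : IntegrableOn
      (fun ω => CC * (W ω ^ 2 * pnum μ W β v ω / pden μ W q β B y ω))
      {ω | W ω ≤ (M:ℝ)} μ :=
    (wsq_integrableOn hWmeas hWnn hWint hEW hβ hBnn hq y hvle M).const_mul _
  have hstep1 : CC * K ≤ ∫ ω in {ω | W ω ≤ (M:ℝ)}, Dg ω ∂μ := by
    rw [hK, ← integral_const_mul]
    exact setIntegral_mono_on hbint (hDgint.integrableOn) hsM hptM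
  have hstep2 : (∫ ω in {ω | W ω ≤ (M:ℝ)}, Dg ω ∂μ) ≤ ∫ ω, Dg ω ∂μ :=
    setIntegral_le_integral hDgint (ae_of_all _ hDgnn)
  -- upper bound from maximality
  have hsumsq : ∑ k : Fin q, (z k) ^ 2 = (∑ k : Fin q, (y k) ^ 2) + 2 * t ^ 2 := by
    have s1 := sum_sq_update y i (v + t)
    have s2 := sum_sq_update y1 j (v - t)
    rw [← hy1] at s1
    rw [← hz] at s2
    rw [s2, s1, hy1j, hvj, ← hv]
    ring
  have hILog : (∫ ω, Dg ω ∂μ) = (∫ ω, Real.log (pden μ W q β B z ω) ∂μ)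
      - ∫ ω, Real.log (pden μ W q β B y ω) ∂μ := by
    simp only [hDg]
    exact integral_sub (log_pden_integrable hWmeas hWnn hWint hEW hq z)
      (log_pden_integrable hWmeas hWnn hWint hEW hq y)
  have hGz := hmax z
  rw [pottsG_eq z, pottsG_eq y, hsumsq] at hGz
  have hUB : (∫ ω, Dg ω ∂μ) ≤ (c / E) * t ^ 2 := by
    rw [hILog]
    have : c / (2 * E) * ((∑ k : Fin q, (y k) ^ 2) + 2 * t ^ 2)
        - c / (2 * E) * (∑ k : Fin q, (y k) ^ 2) = (c / E) * t ^ 2 := by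
      field_simp
      ring
    linarith [hGz, this]
  -- final contradiction
  have hLBeq : CC * K = (c / E) * t ^ 2 * ((1 - η) * θ) := by
    rw [hCC, hθdef]
    field_simp
  have hηθ : η * θ < θ - 1 := (lt_div_iff₀ hθpos).mp hηlt
  have hgt1 : 1 < (1 - η) * θ := by nlinarith [hηθ]
  have hfrac : 0 < (c / E) * t ^ 2 := by
    apply mul_pos (div_pos hcpos hEW)
    positivity
  have hstrict : (c / E) * t ^ 2 * 1 < (c / E) * t ^ 2 * ((1 - η) * θ) :=
    mul_lt_mul_of_pos_left hgt1 hfrac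
  linarith [hstep1, hstep2, hUB, hLBeq, hstrict]

end PottsProof

/-- **Solution structure for small magnetic fields**: for a small enough nonnegative field,
every maximizer of `G` has at most one coordinate exceeding the minimizer `x_*(y,B)`
of `g_{y,B}` on `(0, y_max]`. -/
theorem small_field_solution_structure
    {Ω : Type*} [MeasurableSpace Ω] (μ : Measure Ω) [IsProbabilityMeasure μ]
    (W : Ω → ℝ) (hWmeas : Measurable W) (hWnn : ∀ ω, 0 ≤ W ω)
    (hWint : Integrable W μ) (hEW : 0 < ∫ ω, W ω ∂μ)
    (q : ℕ) (hq : 2 ≤ q) (β : ℝ) (hβ : 0 < β) :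
    ∃ ε > (0 : ℝ), ∀ B : Fin q → ℝ, (∀ i, 0 ≤ B i) → (∀ i, B i < ε) →
      ∀ y : Fin q → ℝ,
        (∀ z : Fin q → ℝ, pottsG μ W q β B z ≤ pottsG μ W q β B y) →
        ∀ xs ∈ Ioc (0 : ℝ) (⨆ i, y i),
          (∀ x ∈ Ioc (0 : ℝ) (⨆ i, y i), pottsg μ W q β B y xs ≤ pottsg μ W q β B y x) →
          (Finset.univ.filter (fun i : Fin q => xs < y i)).card ≤ 1 := by
  refine ⟨1, one_pos, ?_⟩
  intro B hBnn _hBlt y hmax xs hxs hmin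
  have hq0 : 0 < q := lt_of_lt_of_le two_pos hq
  by_contra hcard
  push_neg at hcard
  obtain ⟨i, hi, j, hj, hij⟩ := Finset.one_lt_card.mp hcard
  have hxi : xs < y i := (Finset.mem_filter.mp hi).2
  have hxj : xs < y j := (Finset.mem_filter.mp hj).2
  have hgi := PottsProof.pottsg_at_coord hWmeas hWnn hWint hEW hβ hBnn hq0 hmax i
  have hgj := PottsProof.pottsg_at_coord hWmeas hWnn hWint hEW hβ hBnn hq0 hmax j
  rcases lt_trichotomy (y i) (y j) with hlt | heq | hgt
  · have hmono := PottsProof.pottsg_strictMonoOn hWmeas hWnn hWint hEW hβ hBnn hq0 y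
      hxs hmin hxi hlt (PottsProof.le_iSup' y j)
    rw [hgi, hgj] at hmono
    have hBij : B j < B i := by
      have := Real.exp_lt_exp.mp hmono
      linarith
    exact PottsProof.swap_contradiction hWmeas hWnn hWint hEW hβ hq0 hmax hij hlt hBij
  · have hBeq : B i = B j := by
      rw [← heq] at hgj
      rw [hgi] at hgj
      have h2 : -(B i) = -(B j) := Real.exp_injective hgj
      linarith
    exact PottsProof.equal_coords_contradiction hWmeas hWnn hWint hEW hβ hBnn hq0 hmax
      hxs hmin hij heq hBeq hxi
  · have hmono := PottsProof.pottsg_strictMonoOn hWmeas hWnn hWint hEW hβ hBnn hq0 y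
      hxs hmin hxj hgt (PottsProof.le_iSup' y i)
    rw [hgi, hgj] at hmono
    have hBji : B i < B j := by
      have := Real.exp_lt_exp.mp hmono
      linarith
    exact PottsProof.swap_contradiction hWmeas hWnn hWint hEW hβ hq0 hmax hij.symm hgt hBji
end

section
/- Let W be a nonnegative real random variable with 0<E[W]<∞ and E[W²]<∞, let q≥3 be an integer and 0≤B<log(q−1). Define 𝓕_B(t)=E[(W/E[W])·(e^{tW+B}−1)/(e^{tW+B}+q−1)] for t≥0, and assume the zero-crossing condition: there exists t_*(B)>0 suchที that 𝓕_B''(t)>0 for 0<t<t_*(B) and 𝓕_B''(t)<0 for t>t_*(B), and moreover 𝓕_B'(t_*(B)) > 𝓕_B(t_*(B))/t_*(B). Then the equation 𝓕_B(t) = t·𝓕_B'(t) has exactly two solutions t_a(B) and t_b(B) in [0,∞), and these satisfy 0 ≤ t_a(B) < t_*(B) < t_b(B); equivalently, there are exactly two tangent lines to the graph of 𝓕_B passing through the origin, with slopes 𝓕_B'(t_a(B)) and 𝓕_B'(t_b(B)). -/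
open MeasureTheory Filter Topology Set

/-- The function `𝓕_B(t) = E[(W/E[W])·(e^{tW+B}−1)/(e^{tW+B}+q−1)]`. -/
noncomputable def Ffun {Ω : Type*} [MeasurableSpace Ω] (μ : Measure Ω)
    (W : Ω → ℝ) (q : ℕ) (B : ℝ) (t : ℝ) : ℝ :=
  ∫ ω, (W ω / (∫ ω', W ω' ∂μ)) * (Real.exp (t * W ω + B) - 1) /
    (Real.exp (t * W ω + B) + q - 1) ∂μ

/-- The pointwise derivative in `t` of the integrand of `Ffun`, integrated. -/
noncomputable def Fder {Ω : Type*} [MeasurableSpace Ω] (μ : Measure Ω)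
    (W : Ω → ℝ) (q : ℕ) (B : ℝ) (t : ℝ) : ℝ :=
  ∫ ω, (W ω / (∫ ω', W ω' ∂μ)) * (W ω * Real.exp (t * W ω + B)) * q /
    (Real.exp (t * W ω + B) + q - 1) ^ 2 ∂μ

section aux

variable {Ω : Type*} [MeasurableSpace Ω] (μ : Measure Ω)

lemma den_pos {q : ℕ} (hq : 3 ≤ q) (x : ℝ) : 0 < Real.exp x + (q : ℝ) - 1 := by
  have h1 : (3 : ℝ) ≤ (q : ℝ) := by exact_mod_cast hq
  have := Real.exp_pos x
  linarith

lemma frac_abs_le {q : ℕ} (hq : 3 ≤ q) (x : ℝ) :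
    |(Real.exp x - 1) / (Real.exp x + (q : ℝ) - 1)| ≤ 1 := by
  have hd := den_pos hq x
  have h1 : (3 : ℝ) ≤ (q : ℝ) := by exact_mod_cast hq
  have := Real.exp_pos x
  rw [abs_div, abs_of_pos hd, div_le_one hd, abs_le]
  constructor <;> linarith

lemma meas_exp {q : ℕ} (W : Ω → ℝ) (hWmeas : Measurable W) (B t : ℝ) :
    Measurable fun ω => Real.exp (t * W ω + B) :=
  Real.measurable_exp.comp ((hWmeas.const_mul t).add_const B)

lemma g_meas (W : Ω → ℝ) (hWmeas : Measurable W) (q : ℕ) (B t E : ℝ) :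
    Measurable fun ω =>
      W ω / E * (Real.exp (t * W ω + B) - 1) / (Real.exp (t * W ω + B) + (q:ℝ) - 1) := by
  have m1 := meas_exp (q := q) W hWmeas B t
  exact ((hWmeas.div_const E).mul (m1.sub_const 1)).div ((m1.add_const (q:ℝ)).sub_const 1)

lemma h_meas (W : Ω → ℝ) (hWmeas : Measurable W) (q : ℕ) (B t E : ℝ) :
    Measurable fun ω =>
      W ω / E * (W ω * Real.exp (t * W ω + B)) * (q:ℝ) /
        (Real.exp (t * W ω + B) + (q:ℝ) - 1) ^ 2 := by
  have m1 := meas_exp (q := q) W hWmeas B t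
  exact (((hWmeas.div_const E).mul (hWmeas.mul m1)).mul_const (q:ℝ)).div
    (((m1.add_const (q:ℝ)).sub_const 1).pow_const 2)

/-- bound on the derivative integrand -/
lemma h_bound_pt {q : ℕ} (hq : 3 ≤ q) {w E : ℝ} (hw : 0 ≤ w) (hE : 0 < E) (x : ℝ) :
    ‖w / E * (w * Real.exp x) * (q:ℝ) / (Real.exp x + (q:ℝ) - 1) ^ 2‖ ≤ 2 * w ^ 2 / E := by
  have hd := den_pos hq x
  have h1 : (3 : ℝ) ≤ (q : ℝ) := by exact_mod_cast hq
  have he := Real.exp_pos x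
  have hnn : 0 ≤ w / E * (w * Real.exp x) * (q:ℝ) / (Real.exp x + (q:ℝ) - 1) ^ 2 := by
    positivity
  rw [Real.norm_eq_abs, abs_of_nonneg hnn]
  have hr : Real.exp x * (q:ℝ) / (Real.exp x + (q:ℝ) - 1) ^ 2 ≤ 2 := by
    rw [div_le_iff₀ (by positivity)]
    nlinarith [sq_nonneg (Real.exp x - ((q:ℝ) - 1))]
  have hEne : E ≠ 0 := hE.ne'
  have hdne : Real.exp x + (q:ℝ) - 1 ≠ 0 := hd.ne'
  calc w / E * (w * Real.exp x) * (q:ℝ) / (Real.exp x + (q:ℝ) - 1) ^ 2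
      = w ^ 2 / E * (Real.exp x * (q:ℝ) / (Real.exp x + (q:ℝ) - 1) ^ 2) := by
        field_simp
    _ ≤ w ^ 2 / E * 2 := mul_le_mul_of_nonneg_left hr (by positivity)
    _ = 2 * w ^ 2 / E := by ring

end aux

section main

variable {Ω : Type*} [MeasurableSpace Ω] {μ : Measure Ω} [IsProbabilityMeasure μ]
  {W : Ω → ℝ} {q : ℕ} {B : ℝ}

lemma g_integrable (hWmeas : Measurable W) (hWnn : ∀ ω, 0 ≤ W ω)
    (hWint : Integrable W μ) (hq : 3 ≤ q) (hB0 : 0 ≤ B) (t : ℝ) :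
    Integrable (fun ω => W ω / (∫ ω', W ω' ∂μ) * (Real.exp (t * W ω + B) - 1) /
      (Real.exp (t * W ω + B) + (q:ℝ) - 1)) μ := by
  set E := ∫ ω', W ω' ∂μ
  refine Integrable.mono' (hWint.div_const E |>.abs) ((g_meas W hWmeas q B t E).aestronglyMeasurable)
    (Eventually.of_forall fun ω => ?_)
  have hf := frac_abs_le hq (t * W ω + B)
  show ‖W ω / E * (Real.exp (t * W ω + B) - 1) / (Real.exp (t * W ω + B) + (q:ℝ) - 1)‖ ≤
    |W ω / E|
  rw [Real.norm_eq_abs, mul_div_assoc, abs_mul]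
  calc |W ω / E| * |(Real.exp (t * W ω + B) - 1) / (Real.exp (t * W ω + B) + (q:ℝ) - 1)|
      ≤ |W ω / E| * 1 := by
        exact mul_le_mul_of_nonneg_left hf (abs_nonneg _)
    _ = |W ω / E| := mul_one _

lemma Ffun_hasDerivAt (hWmeas : Measurable W) (hWnn : ∀ ω, 0 ≤ W ω)
    (hWint : Integrable W μ) (hEW : 0 < ∫ ω, W ω ∂μ)
    (hW2 : Integrable (fun ω => (W ω) ^ 2) μ)
    (hq : 3 ≤ q) (hB0 : 0 ≤ B) (t₀ : ℝ) :
    HasDerivAt (Ffun μ W q B) (Fder μ W q B t₀) t₀ := by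
  set E := ∫ ω', W ω' ∂μ with hEdef
  have key := hasDerivAt_integral_of_dominated_loc_of_deriv_le (μ := μ) (𝕜 := ℝ)
    (F := fun t ω => W ω / E * (Real.exp (t * W ω + B) - 1) /
      (Real.exp (t * W ω + B) + (q:ℝ) - 1))
    (F' := fun t ω => W ω / E * (W ω * Real.exp (t * W ω + B)) * (q:ℝ) /
      (Real.exp (t * W ω + B) + (q:ℝ) - 1) ^ 2)
    (x₀ := t₀) (bound := fun ω => 2 * W ω ^ 2 / E) (s := Metric.ball t₀ 1) (Metric.ball_mem_nhds t₀ zero_lt_one)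
    (Eventually.of_forall fun t => (g_meas W hWmeas q B t E).aestronglyMeasurable)
    (g_integrable hWmeas hWnn hWint hq hB0 t₀)
    ((h_meas W hWmeas q B t₀ E).aestronglyMeasurable)
    (Eventually.of_forall fun ω t _ => h_bound_pt hq (hWnn ω) hEW _)
    ((hW2.const_mul 2).div_const E)
    (Eventually.of_forall fun ω t _ => ?_)
  · exact key.2
  · -- pointwise derivative
    have hX : HasDerivAt (fun t : ℝ => Real.exp (t * W ω + B))
        (W ω * Real.exp (t * W ω + B)) t := by
      have h1 : HasDerivAt (fun t : ℝ => t * W ω + B) (W ω) t := by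
        simpa using ((hasDerivAt_id t).mul_const (W ω)).add_const B
      simpa [mul_comm] using h1.exp
    have hu : HasDerivAt (fun t : ℝ => W ω / E * (Real.exp (t * W ω + B) - 1))
        (W ω / E * (W ω * Real.exp (t * W ω + B))) t := (hX.sub_const 1).const_mul _
    have hv : HasDerivAt (fun t : ℝ => Real.exp (t * W ω + B) + (q:ℝ) - 1)
        (W ω * Real.exp (t * W ω + B)) t := (hX.add_const (q:ℝ)).sub_const 1
    have hv0 : Real.exp (t * W ω + B) + (q:ℝ) - 1 ≠ 0 := (den_pos hq _).ne'
    have := hu.div hv hv0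
    refine this.congr_deriv ?_
    have hd := den_pos hq (t * W ω + B)
    field_simp
    ring

lemma Fder_continuous (hWmeas : Measurable W) (hWnn : ∀ ω, 0 ≤ W ω)
    (hEW : 0 < ∫ ω, W ω ∂μ) (hW2 : Integrable (fun ω => (W ω) ^ 2) μ)
    (hq : 3 ≤ q) : Continuous (Fder μ W q B) := by
  set E := ∫ ω', W ω' ∂μ with hEdef
  apply continuous_of_dominated (bound := fun ω => 2 * W ω ^ 2 / E)
    (fun t => (h_meas W hWmeas q B t E).aestronglyMeasurable)
    (fun t => Eventually.of_forall fun ω => h_bound_pt hq (hWnn ω) hEW _)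
    ((hW2.const_mul 2).div_const E)
  refine Eventually.of_forall fun ω => ?_
  have hc1 : Continuous fun t : ℝ => Real.exp (t * W ω + B) :=
    Real.continuous_exp.comp ((continuous_id.mul continuous_const).add continuous_const)
  exact (((continuous_const.mul (continuous_const.mul hc1)).mul continuous_const).div
    (((hc1.add continuous_const).sub continuous_const).pow 2)
    fun t => pow_ne_zero 2 (den_pos hq _).ne')

lemma Ffun_le_one (hWmeas : Measurable W) (hWnn : ∀ ω, 0 ≤ W ω)
    (hWint : Integrable W μ) (hEW : 0 < ∫ ω, W ω ∂μ)
    (hq : 3 ≤ q) (hB0 : 0 ≤ B) (t : ℝ) : Ffun μ W q B t ≤ 1 := by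
  set E := ∫ ω', W ω' ∂μ with hEdef
  have h1 : Ffun μ W q B t ≤ ∫ ω, W ω / E ∂μ := by
    apply integral_mono (g_integrable hWmeas hWnn hWint hq hB0 t) (hWint.div_const E)
    intro ω
    have hd := den_pos hq (t * W ω + B)
    have hc : 0 ≤ W ω / E := div_nonneg (hWnn ω) hEW.le
    show W ω / E * (Real.exp (t * W ω + B) - 1) / (Real.exp (t * W ω + B) + (q:ℝ) - 1) ≤ W ω / E
    rw [mul_div_assoc]
    calc W ω / E * ((Real.exp (t * W ω + B) - 1) / (Real.exp (t * W ω + B) + (q:ℝ) - 1))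
        ≤ W ω / E * 1 := by
          refine mul_le_mul_of_nonneg_left ?_ hc
          rw [div_le_one hd]
          have h3 : (3:ℝ) ≤ (q:ℝ) := by exact_mod_cast hq
          linarith
      _ = W ω / E := mul_one _
  have h2 : ∫ ω, W ω / E ∂μ = 1 := by
    rw [integral_div]
    exact div_self hEW.ne'
  linarith

lemma Ffun_zero_nonneg (hWnn : ∀ ω, 0 ≤ W ω) (hEW : 0 < ∫ ω, W ω ∂μ)
    (hq : 3 ≤ q) (hB0 : 0 ≤ B) (t : ℝ) (ht : 0 ≤ t) : 0 ≤ Ffun μ W q B t := by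
  apply integral_nonneg
  intro ω
  have hd := den_pos hq (t * W ω + B)
  have he : 1 ≤ Real.exp (t * W ω + B) := by
    rw [Real.one_le_exp_iff]
    have := mul_nonneg ht (hWnn ω)
    linarith
  have hc : 0 ≤ W ω / (∫ ω', W ω' ∂μ) := div_nonneg (hWnn ω) hEW.le
  exact div_nonneg (mul_nonneg hc (by linarith)) hd.le

lemma Ffun_tstar_pos (hWmeas : Measurable W) (hWnn : ∀ ω, 0 ≤ W ω)
    (hWint : Integrable W μ) (hEW : 0 < ∫ ω, W ω ∂μ)
    (hq : 3 ≤ q) (hB0 : 0 ≤ B) {t : ℝ} (ht : 0 < t) : 0 < Ffun μ W q B t := by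
  have hgnn : ∀ ω, 0 ≤ W ω / (∫ ω', W ω' ∂μ) * (Real.exp (t * W ω + B) - 1) /
      (Real.exp (t * W ω + B) + (q:ℝ) - 1) := by
    intro ω
    have hd := den_pos hq (t * W ω + B)
    have he : 1 ≤ Real.exp (t * W ω + B) := by
      rw [Real.one_le_exp_iff]
      have := mul_nonneg ht.le (hWnn ω)
      linarith
    have hc : 0 ≤ W ω / (∫ ω', W ω' ∂μ) := div_nonneg (hWnn ω) hEW.le
    exact div_nonneg (mul_nonneg hc (by linarith)) hd.le
  rw [Ffun, integral_pos_iff_support_of_nonneg hgnn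
    (g_integrable hWmeas hWnn hWint hq hB0 t)]
  have hsupp : Function.support W ⊆ Function.support
      (fun ω => W ω / (∫ ω', W ω' ∂μ) * (Real.exp (t * W ω + B) - 1) /
        (Real.exp (t * W ω + B) + (q:ℝ) - 1)) := by
    intro ω hω
    have hWω : 0 < W ω := lt_of_le_of_ne (hWnn ω) (Ne.symm hω)
    have hd := den_pos hq (t * W ω + B)
    have he : 1 < Real.exp (t * W ω + B) := by
      rw [show (1:ℝ) = Real.exp 0 from (Real.exp_zero).symm, Real.exp_lt_exp]
      have := mul_pos ht hWω
      linarith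
    have hc : 0 < W ω / (∫ ω', W ω' ∂μ) := div_pos hWω hEW
    have hpos : 0 < W ω / (∫ ω', W ω' ∂μ) * (Real.exp (t * W ω + B) - 1) /
        (Real.exp (t * W ω + B) + (q:ℝ) - 1) :=
      div_pos (mul_pos hc (by linarith)) hd
    exact Function.mem_support.mpr hpos.ne'
  have hWsupp : 0 < μ (Function.support W) := by
    by_contra h
    push_neg at h
    have h0 : μ (Function.support W) = 0 := le_antisymm h zero_le
    have hae : W =ᵐ[μ] 0 := by
      rw [Filter.EventuallyEq, ae_iff]
      simpa [Function.support] using h0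
    rw [integral_congr_ae hae] at hEW
    simp at hEW
  exact lt_of_lt_of_le hWsupp (measure_mono hsupp)

end main

/-- **Tangent lines**: under the zero-crossing condition, the equation
`𝓕_B(t) = t·𝓕_B'(t)` has exactly two solutions `t_a < t_* < t_b` in `[0,∞)`. -/
theorem tangent_lines
    {Ω : Type*} [MeasurableSpace Ω] (μ : Measure Ω) [IsProbabilityMeasure μ]
    (W : Ω → ℝ) (hWmeas : Measurable W) (hWnn : ∀ ω, 0 ≤ W ω)
    (hWint : Integrable W μ) (hEW : 0 < ∫ ω, W ω ∂μ)
    (hW2 : Integrable (fun ω => (W ω) ^ 2) μ)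
    (q : ℕ) (hq : 3 ≤ q) (B : ℝ) (hB0 : 0 ≤ B) (hB1 : B < Real.log (q - 1))
    (tstar : ℝ) (htstar : 0 < tstar)
    -- zero-crossing condition (a): unique inflection point
    (hconvex : ∀ t : ℝ, 0 < t → t < tstar → 0 < deriv (deriv (Ffun μ W q B)) t)
    (hconcave : ∀ t : ℝ, tstar < t → deriv (deriv (Ffun μ W q B)) t < 0)
    -- zero-crossing condition (b): steepness at the inflection point
    (hsteep : Ffun μ W q B tstar / tstar < deriv (Ffun μ W q B) tstar) :
    ∃ ta tb : ℝ, 0 ≤ ta ∧ ta < tstar ∧ tstar < tb ∧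
      Ffun μ W q B ta = ta * deriv (Ffun μ W q B) ta ∧
      Ffun μ W q B tb = tb * deriv (Ffun μ W q B) tb ∧
      ∀ t : ℝ, 0 ≤ t → Ffun μ W q B t = t * deriv (Ffun μ W q B) t →
        t = ta ∨ t = tb := by
  classical
  have hF' : ∀ t, HasDerivAt (Ffun μ W q B) (Fder μ W q B t) t :=
    fun t => Ffun_hasDerivAt hWmeas hWnn hWint hEW hW2 hq hB0 t
  have hd : deriv (Ffun μ W q B) = Fder μ W q B := funext fun t => (hF' t).deriv
  rw [hd] at hconvex hconcave hsteep ⊢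
  set F := Ffun μ W q B with hFdef
  set f := Fder μ W q B with hfdef
  have hfc : Continuous f := Fder_continuous hWmeas hWnn hEW hW2 hq
  have hFdiff : Differentiable ℝ F := fun t => (hF' t).differentiableAt
  have hFc : Continuous F := hFdiff.continuous
  set G : ℝ → ℝ := fun t => F t - t * f t with hGdef
  have hGc : Continuous G := hFc.sub (continuous_id.mul hfc)
  have hGderiv : ∀ t : ℝ, deriv f t ≠ 0 → HasDerivAt G (-(t * deriv f t)) t := by
    intro t hne
    have hdiff : DifferentiableAt ℝ f t := by
      by_contra h
      exact hne (deriv_zero_of_not_differentiableAt h)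
    have h1 : HasDerivAt (fun s => s * f s) (1 * f t + t * deriv f t) t :=
      (hasDerivAt_id t).mul hdiff.hasDerivAt
    have h2 := (hF' t).sub h1
    refine h2.congr_deriv ?_
    ring
  have hanti : StrictAntiOn G (Icc 0 tstar) := by
    apply strictAntiOn_of_deriv_neg (convex_Icc 0 tstar) hGc.continuousOn
    intro t ht
    rw [interior_Icc] at ht
    have hpos := hconvex t ht.1 ht.2
    rw [(hGderiv t hpos.ne').deriv]
    have h0 : 0 < t * deriv f t := mul_pos ht.1 hpos
    linarith
  have hmono : StrictMonoOn G (Ici tstar) := by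
    apply strictMonoOn_of_deriv_pos (convex_Ici tstar) hGc.continuousOn
    intro t ht
    rw [interior_Ici] at ht
    have hneg := hconcave t ht
    rw [(hGderiv t hneg.ne).deriv]
    have h0t : 0 < t := htstar.trans ht
    nlinarith
  have hG0 : 0 ≤ G 0 := by
    have h0 : G 0 = F 0 := by simp [hGdef]
    rw [h0]
    exact Ffun_zero_nonneg hWnn hEW hq hB0 0 le_rfl
  have hGts : G tstar < 0 := by
    have h1 := (div_lt_iff₀ htstar).mp hsteep
    have h2 : G tstar = F tstar - tstar * f tstar := rfl
    rw [h2]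
    nlinarith
  have hfanti : StrictAntiOn f (Ici tstar) := by
    apply strictAntiOn_of_deriv_neg (convex_Ici tstar) hfc.continuousOn
    intro t ht
    rw [interior_Ici] at ht
    exact hconcave t ht
  have hT : ∃ T, tstar < T ∧ 0 ≤ G T := by
    by_contra hcon
    push_neg at hcon
    have hFts : 0 < F tstar := Ffun_tstar_pos hWmeas hWnn hWint hEW hq hB0 htstar
    have hc0pos : 0 < F tstar / tstar := div_pos hFts htstar
    set c0 := F tstar / tstar with hc0
    have hkey : ∀ t, tstar < t → F tstar + (t - tstar) * f t ≤ F t := by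
      intro t ht
      have hphi : StrictMonoOn (fun s => F s - f t * s) (Icc tstar t) := by
        apply strictMonoOn_of_deriv_pos (convex_Icc _ _)
          (hFc.sub (continuous_const.mul continuous_id')).continuousOn
        intro s hs
        rw [interior_Icc] at hs
        have hds : HasDerivAt (fun s => F s - f t * s) (f s - f t * 1) s :=
          (hF' s).sub ((hasDerivAt_id s).const_mul (f t))
        show 0 < deriv (fun s => F s - f t * s) s
        rw [hds.deriv]
        have hlt : f t < f s := hfanti (mem_Ici.mpr hs.1.le) (mem_Ici.mpr ht.le) hs.2
        linarith
      have hmle : F tstar - f t * tstar < F t - f t * t :=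
        hphi (left_mem_Icc.mpr ht.le) (right_mem_Icc.mpr ht.le) ht
      nlinarith
    have hflb : ∀ t, tstar < t → c0 < f t := by
      intro t ht
      have h1 := hkey t ht
      have h3 : F t < t * f t := by
        have := hcon t ht
        have h2 : G t = F t - t * f t := rfl
        rw [h2] at this
        linarith
      have h4 : F tstar < tstar * f t := by nlinarith
      rw [hc0, div_lt_iff₀ htstar]
      nlinarith
    have hgrow : ∀ t, tstar < t → F tstar + c0 * (t - tstar) < F t := by
      intro t ht
      have hpsi : StrictMonoOn (fun s => F s - c0 * s) (Ici tstar) := by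
        apply strictMonoOn_of_deriv_pos (convex_Ici _)
          (hFc.sub (continuous_const.mul continuous_id')).continuousOn
        intro s hs
        rw [interior_Ici] at hs
        have hds : HasDerivAt (fun s => F s - c0 * s) (f s - c0 * 1) s :=
          (hF' s).sub ((hasDerivAt_id s).const_mul c0)
        show 0 < deriv (fun s => F s - c0 * s) s
        rw [hds.deriv]
        have := hflb s hs
        linarith
      have hmle : F tstar - c0 * tstar < F t - c0 * t :=
        hpsi self_mem_Ici (mem_Ici.mpr ht.le) ht
      nlinarith
    have hle1 : F tstar ≤ 1 := Ffun_le_one hWmeas hWnn hWint hEW hq hB0 tstar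
    set T := tstar + (2 - F tstar) / c0 with hTdef
    have hTgt : tstar < T := by
      have hx : 0 < (2 - F tstar) / c0 := div_pos (by linarith) hc0pos
      rw [hTdef]
      linarith
    have h1 := hgrow T hTgt
    have h2 : c0 * (T - tstar) = 2 - F tstar := by
      rw [hTdef]
      field_simp
      ring
    have h3 := Ffun_le_one hWmeas hWnn hWint hEW hq hB0 T
    rw [← hFdef] at h3
    linarith
  obtain ⟨T, hTgt, hGT⟩ := hT
  obtain ⟨ta, htamem, hGta⟩ := intermediate_value_Icc' htstar.le hGc.continuousOn
    (show (0:ℝ) ∈ Icc (G tstar) (G 0) from ⟨hGts.le, hG0⟩)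
  obtain ⟨tb, htbmem, hGtb⟩ := intermediate_value_Icc hTgt.le hGc.continuousOn
    (show (0:ℝ) ∈ Icc (G tstar) (G T) from ⟨hGts.le, hGT⟩)
  have htalt : ta < tstar := by
    rcases lt_or_eq_of_le htamem.2 with h | h
    · exact h
    · rw [h] at hGta
      exact absurd hGta hGts.ne
  have htblt : tstar < tb := by
    rcases lt_or_eq_of_le htbmem.1 with h | h
    · exact h
    · rw [← h] at hGtb
      exact absurd hGtb hGts.ne
  have hGzero_iff : ∀ t : ℝ, G t = 0 ↔ F t = t * f t := by
    intro t
    constructor <;> intro h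
    · have h2 : G t = F t - t * f t := rfl
      rw [h2] at h
      linarith
    · have h2 : G t = F t - t * f t := rfl
      rw [h2, h, sub_self]
  refine ⟨ta, tb, htamem.1, htalt, htblt, ?_, ?_, ?_⟩
  · exact (hGzero_iff ta).mp hGta
  · exact (hGzero_iff tb).mp hGtb
  · intro t ht heq
    have hGt : G t = 0 := (hGzero_iff t).mpr heq
    by_cases hcase : t ≤ tstar
    · left
      exact hanti.injOn ⟨ht, hcase⟩ ⟨htamem.1, htamem.2⟩ (hGt.trans hGta.symm)
    · right
      push_neg at hcase
      exact hmono.injOn (mem_Ici.mpr hcase.le) (mem_Ici.mpr htbmem.1) (hGt.trans hGtb.symm)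
end
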